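/- Every finite skew Boolean algebra embeds in a finite free skew Boolean algebra: for every finite skew Boolean algebra S there exist n ≥ 1, a skew Boolean algebra F freely generated by a set of n distinct elements, and an injective homomorphism S → F. -/

import Mathlib

universe u

/-- A skew Boolean algebra. -/
class SBA (S : Type u) where
  wedge : S → S → S
  vee : S → S → S
  diff : S → S → S
  zero : S
  wedge_assoc : ∀ x y z : S, wedge (wedge x y) z = wedge x (wedge y z)
  vee_assoc : ∀ x y z : S, vee (vee x y) z = vee x (vee y z)
  absorb1 : ∀ x y : S, wedge x (vee x y) = x
  absorb2 : ∀ x y : S, wedge (vee y x) x = x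
  absorb3 : ∀ x y : S, vee x (wedge x y) = x
  absorb4 : ∀ x y : S, vee (wedge y x) x = x
  sdistrib1 : ∀ x y z : S, wedge x (vee y z) = vee (wedge x y) (wedge x z)
  sdistrib2 : ∀ x y z : S, wedge (vee x y) z = vee (wedge x z) (wedge y z)
  zero_wedge : ∀ x : S, wedge zero x = zero
  wedge_zero : ∀ x : S, wedge x zero = zero
  zero_vee : ∀ x : S, vee zero x = x
  vee_zero : ∀ x : S, vee x zero = x
  diff_ax1 : ∀ x y : S, vee (wedge (wedge x y) x) (diff x y) = x
  diff_ax2 : ∀ x y : S, wedge (wedge (wedge x y) x) (diff x y) = zero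
  diff_ax3 : ∀ x y : S, wedge (diff x y) (wedge (wedge x y) x) = zero

namespace SBA

scoped infixl:70 " ⋏ " => SBA.wedge
scoped infixl:65 " ⋎ " => SBA.vee
scoped infixl:70 " ∖ " => SBA.diff

variable {S : Type u} [SBA S]

/-- Green's relation `D`: `x D y` iff `x⋏y⋏x = x` and `y⋏x⋏y = y`. -/
def Drel (x y : S) : Prop := x ⋏ y ⋏ x = x ∧ y ⋏ x ⋏ y = y

/-- The natural partial order: `x ≤ y` iff `x⋏y = x = y⋏x`. -/
def nle (x y : S) : Prop := x ⋏ y = x ∧ y ⋏ x = x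

/-- An atom: a nonzero element with nothing strictly between it and `0`. -/
def IsAtom (a : S) : Prop := a ≠ zero ∧ ∀ x : S, nle x a → x = zero ∨ x = a

/-- `X` generates `S`: the only subset of `S` containing `X` and `0` and closed
under the three operations is `S` itself. -/
def Generates (X : Set S) : Prop :=
  ∀ T : Set S, X ⊆ T → zero ∈ T →
    (∀ a b : S, a ∈ T → b ∈ T → a ⋏ b ∈ T ∧ a ⋎ b ∈ T ∧ a ∖ b ∈ T) →
    T = Set.univ

/-- A homomorphism of skew Boolean algebras. -/
def IsHom {T : Type u} [SBA T] (f : S → T) : Prop :=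
  (∀ a b : S, f (a ⋏ b) = f a ⋏ f b) ∧ (∀ a b : S, f (a ⋎ b) = f a ⋎ f b) ∧
    (∀ a b : S, f (a ∖ b) = f a ∖ f b) ∧ f zero = zero

end SBA

open SBA

/-- A left-handed skew Boolean algebra. -/
class LeftHanded (S : Type u) [SBA S] : Prop where
  lh_wedge : ∀ x y : S, x ⋏ y ⋏ x = x ⋏ y
  lh_vee : ∀ x y : S, x ⋎ y ⋎ x = y ⋎ x

/-- `S` is freely generated by `X` over the variety of all skew Boolean algebras. -/
def FreelyGenerates (S : Type u) [SBA S] (X : Set S) : Prop :=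
  Generates X ∧
    ∀ (T : Type u) [SBA T], ∀ g : X → T,
      ∃ f : S → T, IsHom f ∧ ∀ x : X, f x = g x

/-- `S` is freely generated by `X` over the variety of left-handed skew Boolean algebras. -/
def LFreelyGenerates (S : Type u) [SBA S] [LeftHanded S] (X : Set S) : Prop :=
  Generates X ∧
    ∀ (T : Type u) [SBA T] [LeftHanded T], ∀ g : X → T,
      ∃ f : S → T, IsHom f ∧ ∀ x : X, f x = g x

namespace SBA

variable {S : Type u} [SBA S]

attribute [local simp] wedge_assoc zero_wedge wedge_zero zero_vee vee_zero

@[local simp] theorem wedge_self (x : S) : x ⋏ x = x := by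
  have h2 : x ⋏ (x ⋎ (x ⋏ x)) = x := absorb1 x (x ⋏ x)
  rwa [absorb3 x x] at h2

@[local simp] theorem wedge_wedge_self (x y : S) : x ⋏ (x ⋏ y) = x ⋏ y := by
  rw [← wedge_assoc, wedge_self]

@[local simp] theorem vee_self (x : S) : x ⋎ x = x := by
  have h := absorb4 x (x ⋎ x)
  rwa [absorb2 x x] at h

@[local simp] theorem pair_idem' (x y : S) : x ⋏ (y ⋏ (x ⋏ y)) = x ⋏ y := by
  rw [← wedge_assoc, wedge_self]

@[local simp] theorem pair_idem (x y z : S) : x ⋏ (y ⋏ (x ⋏ (y ⋏ z))) = x ⋏ (y ⋏ z) := by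
  have := wedge_wedge_self (x ⋏ y) z
  simpa using this

theorem vee_absorb_of_wedge (x y : S) (h : x ⋏ y = x) : x ⋎ y = y := by
  have h2 := absorb4 y x
  rwa [h] at h2

theorem wedge_absorb_of_vee (x y : S) (h : x ⋎ y = y) : x ⋏ y = x := by
  have h2 := absorb1 x y
  rwa [h] at h2

theorem vee_absorb_of_wedge' (x y : S) (h : y ⋏ x = x) : y ⋎ x = y := by
  have h2 := absorb3 y x
  rwa [h] at h2

theorem wedge_absorb_of_vee' (x y : S) (h : y ⋎ x = y) : y ⋏ x = x := by
  have h2 := absorb2 x y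
  rwa [h] at h2

theorem perp_symm {x y : S} (h : x ⋏ y = zero) : y ⋏ x = zero := by
  calc y ⋏ x = (y ⋏ x) ⋏ (y ⋏ x) := (wedge_self _).symm
    _ = y ⋏ ((x ⋏ y) ⋏ x) := by simp
    _ = zero := by rw [h]; simp

theorem wedge_diff (x y : S) : x ⋏ (x ∖ y) = x ∖ y := by
  calc x ⋏ (x ∖ y) = ((x ⋏ y ⋏ x) ⋎ (x ∖ y)) ⋏ (x ∖ y) := by rw [diff_ax1]
    _ = ((x ⋏ y ⋏ x) ⋏ (x ∖ y)) ⋎ ((x ∖ y) ⋏ (x ∖ y)) := sdistrib2 _ _ _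
    _ = x ∖ y := by rw [diff_ax2, wedge_self, zero_vee]

theorem diff_wedge (x y : S) : (x ∖ y) ⋏ x = x ∖ y := by
  calc (x ∖ y) ⋏ x = (x ∖ y) ⋏ ((x ⋏ y ⋏ x) ⋎ (x ∖ y)) := by rw [diff_ax1]
    _ = ((x ∖ y) ⋏ (x ⋏ y ⋏ x)) ⋎ ((x ∖ y) ⋏ (x ∖ y)) := sdistrib1 _ _ _
    _ = x ∖ y := by rw [diff_ax3, wedge_self, zero_vee]

theorem nle_diff (x y : S) : nle (x ∖ y) x := ⟨diff_wedge x y, wedge_diff x y⟩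

theorem diff_eq_zero (x y : S) (h : x ⋏ y ⋏ x = x) : x ∖ y = zero := by
  have h2 := diff_ax2 x y
  rw [h] at h2
  rw [← wedge_diff x y, h2]

theorem diff_self (x : S) : x ∖ x = zero := diff_eq_zero x x (by simp)

@[local simp] theorem diff_zero (x : S) : x ∖ zero = x := by
  have h := diff_ax1 x zero
  simpa using h

@[local simp] theorem zero_diff (x : S) : zero ∖ x = zero := by
  have h := diff_ax1 zero x
  simpa using h

theorem nle_refl (x : S) : nle x x := ⟨wedge_self x, wedge_self x⟩

theorem nle_trans {x y z : S} (h1 : nle x y) (h2 : nle y z) : nle x z := by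
  obtain ⟨a1, a2⟩ := h1; obtain ⟨b1, b2⟩ := h2
  constructor
  · rw [← a1, wedge_assoc, b1, a1]
  · rw [← a2, ← wedge_assoc, b2, a2]

theorem nle_antisymm {x y : S} (h1 : nle x y) (h2 : nle y x) : x = y := by
  rw [← h1.1, h2.2]

theorem perp_of_le_left {p x w : S} (h1 : p ⋏ x = p) (h2 : x ⋏ w = zero) :
    p ⋏ w = zero := by rw [← h1, wedge_assoc, h2, wedge_zero]

theorem diff_perp (a e : S) : (a ∖ e) ⋏ e = zero := by
  have k1 : ((a ∖ e) ⋏ e) ⋏ a = zero := by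
    calc ((a ∖ e) ⋏ e) ⋏ a = (a ∖ e) ⋏ (e ⋏ a) := wedge_assoc _ _ _
      _ = ((a ∖ e) ⋏ a) ⋏ (e ⋏ a) := by rw [diff_wedge]
      _ = (a ∖ e) ⋏ ((a ⋏ e) ⋏ a) := by simp
      _ = zero := diff_ax3 a e
  have k2 : ((a ∖ e) ⋏ e) ⋏ (a ∖ e) = zero := by
    calc ((a ∖ e) ⋏ e) ⋏ (a ∖ e) = (((a ∖ e) ⋏ e) ⋏ a) ⋏ (a ∖ e) := by
          simp [wedge_diff]
      _ = zero := by rw [k1, zero_wedge]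
  calc (a ∖ e) ⋏ e = (((a ∖ e) ⋏ e) ⋏ (a ∖ e)) ⋏ e := by simp
    _ = zero := by rw [k2, zero_wedge]

theorem perp_diff (a e : S) : e ⋏ (a ∖ e) = zero := perp_symm (diff_perp a e)

theorem wedge_comm_of_nle {u v e : S} (hu : nle u e) (hv : nle v e) :
    u ⋏ v = v ⋏ u := by
  set u' := e ∖ u with hu'
  have hsand : (e ⋏ u) ⋏ e = u := by rw [hu.2, hu.1]
  have hjoin : u ⋎ u' = e := by have := diff_ax1 e u; rwa [hsand] at this
  have hperp1 : u ⋏ u' = zero := by have := diff_ax2 e u; rwa [hsand] at this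
  have hperp2 : u' ⋏ u = zero := by have := diff_ax3 e u; rwa [hsand] at this
  have hdec1 : v = (u ⋏ v) ⋎ (u' ⋏ v) := by
    calc v = (u ⋎ u') ⋏ v := by rw [hjoin, hv.2]
      _ = (u ⋏ v) ⋎ (u' ⋏ v) := sdistrib2 _ _ _
  have hdec2 : v = (v ⋏ u) ⋎ (v ⋏ u') := by
    calc v = v ⋏ (u ⋎ u') := by rw [hjoin, hv.1]
      _ = (v ⋏ u) ⋎ (v ⋏ u') := sdistrib1 _ _ _
  have kill1 : (u ⋏ v) ⋏ u' = zero := perp_symm (by rw [← wedge_assoc, hperp2, zero_wedge])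
  have kill2 : (u' ⋏ v) ⋏ u = zero := perp_symm (by rw [← wedge_assoc, hperp1, zero_wedge])
  have e1 : u ⋏ v = (u ⋏ v) ⋏ u := by
    calc u ⋏ v = u ⋏ ((v ⋏ u) ⋎ (v ⋏ u')) := by rw [← hdec2]
      _ = (u ⋏ (v ⋏ u)) ⋎ (u ⋏ (v ⋏ u')) := sdistrib1 _ _ _
      _ = (u ⋏ (v ⋏ u)) ⋎ zero := by rw [← wedge_assoc u v u', kill1]
      _ = (u ⋏ v) ⋏ u := by rw [vee_zero, wedge_assoc]
  have e2 : v ⋏ u = (u ⋏ v) ⋏ u := by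
    calc v ⋏ u = ((u ⋏ v) ⋎ (u' ⋏ v)) ⋏ u := by rw [← hdec1]
      _ = ((u ⋏ v) ⋏ u) ⋎ ((u' ⋏ v) ⋏ u) := sdistrib2 _ _ _
      _ = (u ⋏ v) ⋏ u := by rw [kill2, vee_zero]
  rw [e1, e2]

end SBA
namespace SBA

variable {S : Type u} [SBA S]

theorem diff_unique {x y z : S} (h1 : x ⋏ z = z) (h2 : (x ⋏ y ⋏ x) ⋏ z = zero)
    (h3 : (x ⋏ y ⋏ x) ⋎ z = x) : z = x ∖ y := by
  have e1 : z = (x ∖ y) ⋏ z := by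
    calc z = x ⋏ z := h1.symm
      _ = ((x ⋏ y ⋏ x) ⋎ (x ∖ y)) ⋏ z := by rw [diff_ax1]
      _ = ((x ⋏ y ⋏ x) ⋏ z) ⋎ ((x ∖ y) ⋏ z) := sdistrib2 _ _ _
      _ = (x ∖ y) ⋏ z := by rw [h2, zero_vee]
  have e2 : x ∖ y = (x ∖ y) ⋏ z := by
    calc x ∖ y = (x ∖ y) ⋏ x := (diff_wedge _ _).symm
      _ = (x ∖ y) ⋏ ((x ⋏ y ⋏ x) ⋎ z) := by rw [h3]
      _ = ((x ∖ y) ⋏ (x ⋏ y ⋏ x)) ⋎ ((x ∖ y) ⋏ z) := sdistrib1 _ _ _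
      _ = (x ∖ y) ⋏ z := by rw [diff_ax3, zero_vee]
  rw [e1, ← e2]

attribute [local simp] wedge_assoc zero_wedge wedge_zero zero_vee vee_zero
  wedge_self wedge_wedge_self vee_self pair_idem' pair_idem

theorem sandwich_wedge (e a b : S) :
    (e ⋏ a ⋏ e) ⋏ (e ⋏ b ⋏ e) = e ⋏ (a ⋏ b) ⋏ e := by
  have hs'e : (e ∖ (a ⋏ b)) ⋏ e = e ∖ (a ⋏ b) := diff_wedge _ _
  have hes' : e ⋏ (e ∖ (a ⋏ b)) = e ∖ (a ⋏ b) := wedge_diff _ _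
  have hj : (e ⋏ (a ⋏ b) ⋏ e) ⋎ (e ∖ (a ⋏ b)) = e := diff_ax1 e (a ⋏ b)
  have hp2 : (e ∖ (a ⋏ b)) ⋏ (e ⋏ (a ⋏ b) ⋏ e) = zero := diff_ax3 e (a ⋏ b)
  have h_us : (e ⋏ a ⋏ e) ⋏ (e ⋏ (a ⋏ b) ⋏ e) = e ⋏ (a ⋏ b) ⋏ e := by simp
  have h_sv : (e ⋏ (a ⋏ b) ⋏ e) ⋏ (e ⋏ b ⋏ e) = e ⋏ (a ⋏ b) ⋏ e := by simp
  have hs'ab : (e ∖ (a ⋏ b)) ⋏ (a ⋏ b) = zero := by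
    have h0 : ((e ∖ (a ⋏ b)) ⋏ (a ⋏ b)) ⋏ e = zero := by
      calc ((e ∖ (a ⋏ b)) ⋏ (a ⋏ b)) ⋏ e
          = (((e ∖ (a ⋏ b)) ⋏ e) ⋏ (a ⋏ b)) ⋏ e := by rw [hs'e]
        _ = (e ∖ (a ⋏ b)) ⋏ (e ⋏ (a ⋏ b) ⋏ e) := by simp
        _ = zero := hp2
    have h1 : e ⋏ ((e ∖ (a ⋏ b)) ⋏ (a ⋏ b)) = zero := perp_symm h0
    calc (e ∖ (a ⋏ b)) ⋏ (a ⋏ b) = (e ⋏ (e ∖ (a ⋏ b))) ⋏ (a ⋏ b) := by rw [hes']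
      _ = zero := by rw [wedge_assoc, h1]
  have sub1 : b ⋏ ((e ∖ (a ⋏ b)) ⋏ a) = zero := by
    apply perp_symm
    rw [wedge_assoc]; exact hs'ab
  have key : (b ⋏ e) ⋏ (((e ∖ (a ⋏ b)) ⋏ a) ⋏ e) = zero := by
    calc (b ⋏ e) ⋏ (((e ∖ (a ⋏ b)) ⋏ a) ⋏ e)
        = (b ⋏ ((e ⋏ (e ∖ (a ⋏ b))) ⋏ a)) ⋏ e := by simp
      _ = (b ⋏ ((e ∖ (a ⋏ b)) ⋏ a)) ⋏ e := by rw [hes']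
      _ = zero := by rw [sub1, zero_wedge]
  have hN : (((e ∖ (a ⋏ b)) ⋏ a) ⋏ e) ⋏ (b ⋏ e) = zero := perp_symm key
  have hs't : (e ∖ (a ⋏ b)) ⋏ ((e ⋏ a ⋏ e) ⋏ (e ⋏ b ⋏ e)) = zero := by
    calc (e ∖ (a ⋏ b)) ⋏ ((e ⋏ a ⋏ e) ⋏ (e ⋏ b ⋏ e))
        = (((e ∖ (a ⋏ b)) ⋏ e) ⋏ a) ⋏ (e ⋏ (e ⋏ b ⋏ e)) := by simp
      _ = ((e ∖ (a ⋏ b)) ⋏ a) ⋏ (e ⋏ (b ⋏ e)) := by rw [hs'e]; simp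
      _ = (((e ∖ (a ⋏ b)) ⋏ a) ⋏ e) ⋏ (b ⋏ e) := by simp
      _ = zero := hN
  have hts' : ((e ⋏ a ⋏ e) ⋏ (e ⋏ b ⋏ e)) ⋏ (e ∖ (a ⋏ b)) = zero := perp_symm hs't
  have hue : nle (e ⋏ a ⋏ e) e := ⟨by simp, by simp⟩
  have hve : nle (e ⋏ b ⋏ e) e := ⟨by simp, by simp⟩
  have hse : nle (e ⋏ (a ⋏ b) ⋏ e) e := ⟨by simp, by simp⟩
  have hte : nle ((e ⋏ a ⋏ e) ⋏ (e ⋏ b ⋏ e)) e :=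
    ⟨by rw [wedge_assoc, hve.1], by rw [← wedge_assoc, hue.2]⟩
  have hst : (e ⋏ (a ⋏ b) ⋏ e) ⋏ ((e ⋏ a ⋏ e) ⋏ (e ⋏ b ⋏ e)) = e ⋏ (a ⋏ b) ⋏ e := by
    rw [← wedge_assoc, wedge_comm_of_nle hse hue, h_us, h_sv]
  have hts : ((e ⋏ a ⋏ e) ⋏ (e ⋏ b ⋏ e)) ⋏ (e ⋏ (a ⋏ b) ⋏ e) = e ⋏ (a ⋏ b) ⋏ e := by
    rw [wedge_comm_of_nle hte hse]; exact hst
  calc (e ⋏ a ⋏ e) ⋏ (e ⋏ b ⋏ e)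
      = ((e ⋏ a ⋏ e) ⋏ (e ⋏ b ⋏ e)) ⋏ e := hte.1.symm
    _ = ((e ⋏ a ⋏ e) ⋏ (e ⋏ b ⋏ e)) ⋏ ((e ⋏ (a ⋏ b) ⋏ e) ⋎ (e ∖ (a ⋏ b))) := by rw [hj]
    _ = (((e ⋏ a ⋏ e) ⋏ (e ⋏ b ⋏ e)) ⋏ (e ⋏ (a ⋏ b) ⋏ e)) ⋎
        (((e ⋏ a ⋏ e) ⋏ (e ⋏ b ⋏ e)) ⋏ (e ∖ (a ⋏ b))) := sdistrib1 _ _ _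
    _ = e ⋏ (a ⋏ b) ⋏ e := by rw [hts, hts', vee_zero]

end SBA
namespace SBA

variable {S : Type u} [SBA S]

attribute [local simp] wedge_assoc zero_wedge wedge_zero zero_vee vee_zero
  wedge_self wedge_wedge_self vee_self pair_idem' pair_idem

theorem sandwich_vee (e a b : S) :
    e ⋏ (a ⋎ b) ⋏ e = (e ⋏ a ⋏ e) ⋎ (e ⋏ b ⋏ e) := by
  rw [show e ⋏ (a ⋎ b) = (e ⋏ a) ⋎ (e ⋏ b) from sdistrib1 _ _ _, sdistrib2]

theorem sandwich_diff (e a b : S) :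
    e ⋏ (a ∖ b) ⋏ e = (e ⋏ a ⋏ e) ∖ (e ⋏ b ⋏ e) := by
  apply diff_unique
  · rw [sandwich_wedge, wedge_diff]
  · rw [sandwich_wedge, sandwich_wedge, sandwich_wedge, diff_ax2]; simp
  · rw [sandwich_wedge, sandwich_wedge, ← sandwich_vee, diff_ax1]

theorem vee_comm_of_perp {x y : S} (h1 : x ⋏ y = zero) (h2 : y ⋏ x = zero) :
    x ⋎ y = y ⋎ x := by
  have a1 : x ⋏ (y ⋎ x) = x := by rw [sdistrib1, h1, zero_vee, wedge_self]
  have b2 : (x ⋎ y) ⋏ x = x := by rw [sdistrib2, wedge_self, h2, vee_zero]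
  have e1 : (x ⋎ y) ⋏ (y ⋎ x) = x ⋎ y := by
    calc (x ⋎ y) ⋏ (y ⋎ x) = (x ⋏ (y ⋎ x)) ⋎ (y ⋏ (y ⋎ x)) := sdistrib2 _ _ _
      _ = x ⋎ y := by rw [a1, absorb1]
  have e2 : (x ⋎ y) ⋏ (y ⋎ x) = y ⋎ x := by
    calc (x ⋎ y) ⋏ (y ⋎ x) = ((x ⋎ y) ⋏ y) ⋎ ((x ⋎ y) ⋏ x) := sdistrib1 _ _ _
      _ = y ⋎ x := by rw [absorb2, b2]
  rw [← e1, e2]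

theorem vee_comm_of_nle {u v e : S} (hu : nle u e) (hv : nle v e) :
    u ⋎ v = v ⋎ u := by
  have hcomm := wedge_comm_of_nle hu hv
  have haux : (u ⋏ v) ⋏ u = u ⋏ v := by
    calc (u ⋏ v) ⋏ u = (v ⋏ u) ⋏ u := by rw [hcomm]
      _ = v ⋏ u := by rw [wedge_assoc, wedge_self]
      _ = u ⋏ v := hcomm.symm
  have h3 : (u ⋏ v) ⋎ u = u := vee_absorb_of_wedge _ _ haux
  have a1 : u ⋏ (v ⋎ u) = u := by rw [sdistrib1, wedge_self]; exact h3
  have b2 : (u ⋎ v) ⋏ u = u := by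
    rw [sdistrib2, wedge_self, ← hcomm, absorb3]
  have e1 : (u ⋎ v) ⋏ (v ⋎ u) = u ⋎ v := by
    calc (u ⋎ v) ⋏ (v ⋎ u) = (u ⋏ (v ⋎ u)) ⋎ (v ⋏ (v ⋎ u)) := sdistrib2 _ _ _
      _ = u ⋎ v := by rw [a1, absorb1]
  have e2 : (u ⋎ v) ⋏ (v ⋎ u) = v ⋎ u := by
    calc (u ⋎ v) ⋏ (v ⋎ u) = ((u ⋎ v) ⋏ v) ⋎ ((u ⋎ v) ⋏ u) := sdistrib1 _ _ _
      _ = v ⋎ u := by rw [absorb2, b2]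
  rw [← e1, e2]

theorem nle_vee {u v e : S} (hu : nle u e) (hv : nle v e) : nle (u ⋎ v) e :=
  ⟨by rw [sdistrib2, hu.1, hv.1], by rw [sdistrib1, hu.2, hv.2]⟩

theorem nle_wedge {u v e : S} (hu : nle u e) (hv : nle v e) : nle (u ⋏ v) e :=
  ⟨by rw [wedge_assoc, hv.1], by rw [← wedge_assoc, hu.2]⟩

theorem eq_top_of_wedge_eq_top {u v e : S} (hu : nle u e) (hv : nle v e)
    (h : u ⋏ v = e) : u = e ∧ v = e := by
  have hu' : u = e := by
    calc u = u ⋏ e := hu.1.symm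
      _ = u ⋏ (u ⋏ v) := by rw [h]
      _ = e := by rw [← wedge_assoc, wedge_self, h]
  have h2 : e ⋏ v = e := by rw [← h, wedge_assoc, wedge_self]
  have hv' : v = e := by
    calc v = v ⋏ e := hv.1.symm
      _ = e ⋏ v := wedge_comm_of_nle hv (nle_refl e)
      _ = e := h2
  exact ⟨hu', hv'⟩

theorem eq_zero_of_vee_eq_zero {u v : S} (h : u ⋎ v = zero) :
    u = zero ∧ v = zero := by
  constructor
  · have h2 := absorb1 u v
    rw [h, wedge_zero] at h2; exact h2.symm
  · have h2 := absorb2 v u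
    rw [h, zero_wedge] at h2; exact h2.symm

theorem perp_vee {x y z : S} (h1 : x ⋏ y = zero) (h2 : x ⋏ z = zero) :
    x ⋏ (y ⋎ z) = zero := by rw [sdistrib1, h1, h2, vee_zero]

theorem perp_vee_left {x y z : S} (h1 : y ⋏ x = zero) (h2 : z ⋏ x = zero) :
    (y ⋎ z) ⋏ x = zero := by rw [sdistrib2, h1, h2, vee_zero]

theorem drel_refl (x : S) : Drel x x := ⟨by simp, by simp⟩

theorem drel_symm {x y : S} (h : Drel x y) : Drel y x := ⟨h.2, h.1⟩

theorem drel_trans_aux {x y z : S} (h1 : x ⋏ y ⋏ x = x) (h2 : y ⋏ z ⋏ y = y) :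
    x ⋏ z ⋏ x = x := by
  have k1 : x ⋏ ((y ⋏ z) ⋏ y) ⋏ x = x := by
    rw [show (y ⋏ z) ⋏ y = y from h2]; exact h1
  have k2 : (x ⋏ (y ⋏ z) ⋏ x) ⋏ (x ⋏ y ⋏ x) = x := by
    rw [sandwich_wedge]; exact k1
  have k3 : ((x ⋏ y ⋏ x) ⋏ (x ⋏ z ⋏ x)) ⋏ (x ⋏ y ⋏ x) = x := by
    rw [sandwich_wedge]; exact k2
  rw [h1] at k3
  simpa using k3

theorem drel_trans {x y z : S} (h1 : Drel x y) (h2 : Drel y z) : Drel x z :=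
  ⟨drel_trans_aux h1.1 h2.1, drel_trans_aux h2.2 h1.2⟩

theorem drel_wedge {q r : S} (h : Drel q r) : Drel (q ⋏ r) q := by
  constructor
  · have hr : r ⋏ (q ⋏ r) = r := by rw [← wedge_assoc]; exact h.2
    calc ((q ⋏ r) ⋏ q) ⋏ (q ⋏ r) = q ⋏ (r ⋏ (q ⋏ r)) := by simp
      _ = q ⋏ r := by rw [hr]
  · calc (q ⋏ (q ⋏ r)) ⋏ q = (q ⋏ r) ⋏ q := by rw [← wedge_assoc, wedge_self]
      _ = q := h.1

theorem drel_zero {y : S} (h : Drel zero y) : y = zero := by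
  have h2 := h.2
  rw [wedge_zero, zero_wedge] at h2; exact h2.symm

theorem drel_collapse {x y z : S} (hxy : Drel x y) (hyz : Drel y z) :
    x ⋏ y ⋏ z = x ⋏ z := by
  have hxz := drel_trans hxy hyz
  have hzx' : z ⋏ (x ⋏ z) = z := by rw [← wedge_assoc]; exact hxz.2
  have hxyz : Drel x (y ⋏ z) := drel_trans hxy (drel_symm (drel_wedge hyz))
  calc x ⋏ y ⋏ z = x ⋏ (y ⋏ z) := wedge_assoc _ _ _
    _ = x ⋏ (y ⋏ (z ⋏ (x ⋏ z))) := by rw [hzx']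
    _ = (x ⋏ (y ⋏ z) ⋏ x) ⋏ z := by simp
    _ = x ⋏ z := by rw [hxyz.1]

theorem drel_vee {p q : S} (h : Drel p q) : p ⋎ q = q ⋏ p := by
  have h3 : q ⋏ (p ⋎ q) = q ⋏ p := by
    have hwq : (q ⋏ p) ⋎ q = q ⋏ p := vee_absorb_of_wedge' q (q ⋏ p) h.2
    rw [sdistrib1, wedge_self, hwq]
  have h4 : (p ⋎ q) ⋏ p = q ⋏ p := by
    have hp : p ⋎ (q ⋏ p) = q ⋏ p :=
      vee_absorb_of_wedge _ _ (by rw [← wedge_assoc]; exact h.1)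
    rw [sdistrib2, wedge_self, hp]
  have hwz : (q ⋏ p) ⋏ (p ⋎ q) = q ⋏ p := by
    rw [wedge_assoc, absorb1]
  have hzw : (p ⋎ q) ⋏ (q ⋏ p) = q ⋏ p := by
    rw [← wedge_assoc, absorb2]
  have hsand : (p ⋎ q) ⋏ (q ⋏ p) ⋏ (p ⋎ q) = q ⋏ p := by
    rw [show ((p ⋎ q) ⋏ (q ⋏ p)) = q ⋏ p from hzw]; exact hwz
  have hjd : (q ⋏ p) ⋎ ((p ⋎ q) ∖ (q ⋏ p)) = p ⋎ q := by
    have := diff_ax1 (p ⋎ q) (q ⋏ p); rwa [hsand] at this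
  have hwd : (q ⋏ p) ⋏ ((p ⋎ q) ∖ (q ⋏ p)) = zero := by
    have := diff_ax2 (p ⋎ q) (q ⋏ p); rwa [hsand] at this
  have hdq : q ⋏ ((p ⋎ q) ∖ (q ⋏ p)) = zero := by
    calc q ⋏ ((p ⋎ q) ∖ (q ⋏ p)) = q ⋏ ((p ⋎ q) ⋏ ((p ⋎ q) ∖ (q ⋏ p))) := by
          rw [wedge_diff]
      _ = (q ⋏ (p ⋎ q)) ⋏ ((p ⋎ q) ∖ (q ⋏ p)) := by rw [wedge_assoc]
      _ = zero := by rw [h3]; exact hwd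
  have hdp : ((p ⋎ q) ∖ (q ⋏ p)) ⋏ p = zero := by
    calc ((p ⋎ q) ∖ (q ⋏ p)) ⋏ p = (((p ⋎ q) ∖ (q ⋏ p)) ⋏ (p ⋎ q)) ⋏ p := by
          rw [diff_wedge]
      _ = ((p ⋎ q) ∖ (q ⋏ p)) ⋏ ((p ⋎ q) ⋏ p) := wedge_assoc _ _ _
      _ = zero := by rw [h4, ← wedge_assoc, perp_symm hdq, zero_wedge]
  have hd : (p ⋎ q) ∖ (q ⋏ p) = zero := by
    calc (p ⋎ q) ∖ (q ⋏ p) = ((p ⋎ q) ∖ (q ⋏ p)) ⋏ (p ⋎ q) := (diff_wedge _ _).symm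
      _ = (((p ⋎ q) ∖ (q ⋏ p)) ⋏ p) ⋎ (((p ⋎ q) ∖ (q ⋏ p)) ⋏ q) := sdistrib1 _ _ _
      _ = zero := by rw [hdp, perp_symm hdq]; simp
  rw [← hjd, hd, vee_zero]

end SBA
namespace SBA

variable {S : Type u} [SBA S]

def joinList : List S → S
  | [] => zero
  | a :: l => a ⋎ joinList l

@[simp] theorem joinList_nil : joinList ([] : List S) = zero := rfl

@[simp] theorem joinList_cons (a : S) (l : List S) :
    joinList (a :: l) = a ⋎ joinList l := rfl

theorem joinList_all_zero {l : List S} (h : ∀ b ∈ l, b = zero) :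
    joinList l = zero := by
  induction l with
  | nil => rfl
  | cons c t ih =>
    rw [joinList_cons, h c (by simp), ih (fun b hb => h b (by simp [hb])), zero_vee]

theorem joinList_perp {x : S} {l : List S} (h : ∀ b ∈ l, x ⋏ b = zero) :
    x ⋏ joinList l = zero := by
  induction l with
  | nil => simp [wedge_zero]
  | cons c t ih =>
    rw [joinList_cons, sdistrib1, h c (by simp),
      ih (fun b hb => h b (by simp [hb])), zero_vee]

theorem joinList_perp' {x : S} {l : List S} (h : ∀ b ∈ l, b ⋏ x = zero) :
    joinList l ⋏ x = zero := by
  induction l with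
  | nil => simp [zero_wedge]
  | cons c t ih =>
    rw [joinList_cons, sdistrib2, h c (by simp),
      ih (fun b hb => h b (by simp [hb])), zero_vee]

theorem nle_joinList {e : S} {l : List S} (h : ∀ b ∈ l, nle b e) :
    nle (joinList l) e := by
  induction l with
  | nil => exact ⟨zero_wedge e, wedge_zero e⟩
  | cons c t ih =>
    rw [joinList_cons]
    exact nle_vee (h c (by simp)) (ih (fun b hb => h b (by simp [hb])))

theorem joinList_or {v : S} {l : List S} (h : ∀ b ∈ l, b = v ∨ b = zero) :
    joinList l = v ∨ joinList l = zero := by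
  induction l with
  | nil => exact Or.inr rfl
  | cons c t ih =>
    have ih' := ih (fun b hb => h b (by simp [hb]))
    rcases h c (by simp) with hc | hc <;> rcases ih' with hj | hj <;>
      simp [hc, hj, vee_self, vee_zero, zero_vee]

theorem joinList_wedge (l : List S) (x : S) :
    joinList l ⋏ x = joinList (l.map (· ⋏ x)) := by
  induction l with
  | nil => simp [zero_wedge]
  | cons d t ih => simp only [joinList_cons, List.map_cons, sdistrib2, ih]

theorem wedge_joinList (l : List S) (x : S) :
    x ⋏ joinList l = joinList (l.map (x ⋏ ·)) := by
  induction l with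
  | nil => simp [wedge_zero]
  | cons d t ih => simp only [joinList_cons, List.map_cons, sdistrib1, ih]

theorem nle_joinList_of_mem {a : S} {l : List S} (ha : a ∈ l)
    (h : ∀ b ∈ l, b = a ∨ (a ⋏ b = zero ∧ b ⋏ a = zero)) :
    nle a (joinList l) := by
  induction l with
  | nil => cases ha
  | cons c t ih =>
    rw [joinList_cons]
    by_cases hc : c = a
    · subst hc
      constructor
      · exact absorb1 _ _
      · have hJ : joinList t ⋏ c = c ∨ joinList t ⋏ c = zero := by
          have : ∀ b ∈ t.map (· ⋏ c), b = c ∨ b = zero := by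
            intro b hb
            obtain ⟨b', hb', rfl⟩ := List.mem_map.1 hb
            rcases h b' (by simp [hb']) with rfl | hperp
            · exact Or.inl (wedge_self _)
            · exact Or.inr hperp.2
          have h2 := joinList_or this
          rw [← joinList_wedge] at h2; exact h2
        rcases hJ with hJ | hJ <;>
          rw [sdistrib2, wedge_self, hJ] <;> simp [vee_self, vee_zero]
    · have ha' : a ∈ t := by
        rcases List.mem_cons.1 ha with h1 | h1
        · exact absurd h1.symm hc
        · exact h1
      have ih' := ih ha' (fun b hb => h b (by simp [hb]))
      rcases h c (by simp) with rfl | hperp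
      · exact absurd rfl hc
      · constructor
        · rw [sdistrib1, hperp.1, zero_vee, ih'.1]
        · rw [sdistrib2, hperp.2, zero_vee, ih'.2]

section Maps

variable {β : Type*} (l : List β) (f g : β → S)

theorem joinList_map_congr {l : List β} {f g : β → S}
    (h : ∀ c ∈ l, f c = g c) : joinList (l.map f) = joinList (l.map g) := by
  induction l with
  | nil => rfl
  | cons c t ih =>
    simp only [List.map_cons, joinList_cons]
    rw [h c (by simp), ih (fun c' hc' => h c' (by simp [hc']))]

theorem joinList_map_single {l : List β} {f : β → S} {c : β}
    (hl : l.Nodup) (hc : c ∈ l) (h0 : ∀ c' ∈ l, c' ≠ c → f c' = zero) :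
    joinList (l.map f) = f c := by
  induction l with
  | nil => cases hc
  | cons d t ih =>
    simp only [List.map_cons, joinList_cons]
    rcases List.mem_cons.1 hc with rfl | hct
    · have : ∀ b ∈ t.map f, b = zero := by
        intro b hb
        obtain ⟨b', hb', rfl⟩ := List.mem_map.1 hb
        exact h0 b' (by simp [hb']) (fun hEq => (List.nodup_cons.1 hl).1 (hEq ▸ hb'))
      rw [joinList_all_zero this, vee_zero]
    · have hd0 : f d = zero := h0 d (by simp) (fun hEq => (List.nodup_cons.1 hl).1 (hEq ▸ hct))
      rw [hd0, zero_vee]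
      exact ih (List.nodup_cons.1 hl).2 hct (fun c' hc' hne => h0 c' (by simp [hc']) hne)

theorem joinList_wedge_joinList {l : List β} {f g : β → S}
    (hcross : ∀ c ∈ l, ∀ c' ∈ l, c ≠ c' → f c ⋏ g c' = zero)
    (hl : l.Nodup) :
    joinList (l.map f) ⋏ joinList (l.map g) = joinList (l.map (fun c => f c ⋏ g c)) := by
  induction l with
  | nil => simp [zero_wedge]
  | cons c t ih =>
    have hnd := List.nodup_cons.1 hl
    simp only [List.map_cons, joinList_cons]
    have h1 : f c ⋏ joinList (t.map g) = zero := by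
      apply joinList_perp
      intro b hb
      obtain ⟨b', hb', rfl⟩ := List.mem_map.1 hb
      exact hcross c (by simp) b' (by simp [hb']) (fun hEq => hnd.1 (hEq ▸ hb'))
    have h2 : joinList (t.map f) ⋏ g c = zero := by
      apply joinList_perp'
      intro b hb
      obtain ⟨b', hb', rfl⟩ := List.mem_map.1 hb
      exact hcross b' (by simp [hb']) c (by simp) (fun hEq => hnd.1 (hEq ▸ hb'))
    calc (f c ⋎ joinList (t.map f)) ⋏ (g c ⋎ joinList (t.map g))
        = (f c ⋏ (g c ⋎ joinList (t.map g))) ⋎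
          (joinList (t.map f) ⋏ (g c ⋎ joinList (t.map g))) := sdistrib2 _ _ _
      _ = ((f c ⋏ g c) ⋎ zero) ⋎ (zero ⋎ (joinList (t.map f) ⋏ joinList (t.map g))) := by
          rw [sdistrib1, sdistrib1, h1, h2]
      _ = (f c ⋏ g c) ⋎ joinList (t.map (fun c => f c ⋏ g c)) := by
          rw [vee_zero, zero_vee,
            ih (fun a ha b hb hne => hcross a (by simp [ha]) b (by simp [hb]) hne) hnd.2]

theorem joinList_vee_joinList {l : List β} {f g : β → S}
    (hcross : ∀ c ∈ l, ∀ c' ∈ l, c ≠ c' →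
      (f c ⋏ g c' = zero ∧ g c' ⋏ f c = zero))
    (hl : l.Nodup) :
    joinList (l.map f) ⋎ joinList (l.map g) = joinList (l.map (fun c => f c ⋎ g c)) := by
  induction l with
  | nil => simp [zero_vee]
  | cons c t ih =>
    have hnd := List.nodup_cons.1 hl
    simp only [List.map_cons, joinList_cons]
    have hgF : joinList (t.map f) ⋏ g c = zero := by
      apply joinList_perp'
      intro b hb
      obtain ⟨b', hb', rfl⟩ := List.mem_map.1 hb
      exact (hcross b' (by simp [hb']) c (by simp)
        (fun hEq => hnd.1 (hEq ▸ hb'))).2.symm ▸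
        (hcross b' (by simp [hb']) c (by simp) (fun hEq => hnd.1 (hEq ▸ hb'))).1
    have hFg : g c ⋏ joinList (t.map f) = zero := by
      apply joinList_perp
      intro b hb
      obtain ⟨b', hb', rfl⟩ := List.mem_map.1 hb
      exact (hcross b' (by simp [hb']) c (by simp) (fun hEq => hnd.1 (hEq ▸ hb'))).2
    have hswap : joinList (t.map f) ⋎ g c = g c ⋎ joinList (t.map f) :=
      vee_comm_of_perp hgF hFg
    calc (f c ⋎ joinList (t.map f)) ⋎ (g c ⋎ joinList (t.map g))
        = f c ⋎ (joinList (t.map f) ⋎ (g c ⋎ joinList (t.map g))) := vee_assoc _ _ _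
      _ = f c ⋎ ((joinList (t.map f) ⋎ g c) ⋎ joinList (t.map g)) := by rw [vee_assoc]
      _ = f c ⋎ ((g c ⋎ joinList (t.map f)) ⋎ joinList (t.map g)) := by rw [hswap]
      _ = f c ⋎ (g c ⋎ (joinList (t.map f) ⋎ joinList (t.map g))) := by rw [vee_assoc]
      _ = (f c ⋎ g c) ⋎ (joinList (t.map f) ⋎ joinList (t.map g)) := (vee_assoc _ _ _).symm
      _ = (f c ⋎ g c) ⋎ joinList (t.map (fun c => f c ⋎ g c)) := by
          rw [ih (fun a ha b hb hne => hcross a (by simp [ha]) b (by simp [hb]) hne) hnd.2]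

end Maps

end SBA
namespace SBA

variable {S : Type u} [SBA S]

theorem joinList_diff_joinList {β : Type*} {l : List β} {f g : β → S}
    (hl : l.Nodup)
    (hff : ∀ c ∈ l, ∀ c' ∈ l, c ≠ c' → f c ⋏ f c' = zero)
    (hfg : ∀ c ∈ l, ∀ c' ∈ l, c ≠ c' → f c ⋏ g c' = zero)
    (hgf : ∀ c ∈ l, ∀ c' ∈ l, c ≠ c' → g c ⋏ f c' = zero) :
    joinList (l.map f) ∖ joinList (l.map g) = joinList (l.map (fun c => f c ∖ g c)) := by
  have cross_fd : ∀ c ∈ l, ∀ c' ∈ l, c ≠ c' → f c ⋏ (f c' ∖ g c') = zero := by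
    intro c hc c' hc' hne
    calc f c ⋏ (f c' ∖ g c') = f c ⋏ (f c' ⋏ (f c' ∖ g c')) := by rw [wedge_diff]
      _ = (f c ⋏ f c') ⋏ (f c' ∖ g c') := (wedge_assoc _ _ _).symm
      _ = zero := by rw [hff c hc c' hc' hne, zero_wedge]
  have cross_df : ∀ c ∈ l, ∀ c' ∈ l, c ≠ c' → (f c ∖ g c) ⋏ f c' = zero := by
    intro c hc c' hc' hne
    calc (f c ∖ g c) ⋏ f c' = ((f c ∖ g c) ⋏ f c) ⋏ f c' := by rw [diff_wedge]
      _ = (f c ∖ g c) ⋏ (f c ⋏ f c') := wedge_assoc _ _ _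
      _ = zero := by rw [hff c hc c' hc' hne, wedge_zero]
  have cross_fgf : ∀ c ∈ l, ∀ c' ∈ l, c ≠ c' → ((f c ⋏ g c) ⋏ f c) ⋏ f c' = zero := by
    intro c hc c' hc' hne
    calc ((f c ⋏ g c) ⋏ f c) ⋏ f c' = (f c ⋏ g c) ⋏ (f c ⋏ f c') := wedge_assoc _ _ _
      _ = zero := by rw [hff c hc c' hc' hne, wedge_zero]
  have cross_Ad : ∀ c ∈ l, ∀ c' ∈ l, c ≠ c' →
      ((f c ⋏ g c) ⋏ f c) ⋏ (f c' ∖ g c') = zero := by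
    intro c hc c' hc' hne
    calc ((f c ⋏ g c) ⋏ f c) ⋏ (f c' ∖ g c')
        = (f c ⋏ g c) ⋏ (f c ⋏ (f c' ∖ g c')) := wedge_assoc _ _ _
      _ = zero := by rw [cross_fd c hc c' hc' hne, wedge_zero]
  have cross_dA : ∀ c ∈ l, ∀ c' ∈ l, c ≠ c' →
      (f c ∖ g c) ⋏ ((f c' ⋏ g c') ⋏ f c') = zero := by
    intro c hc c' hc' hne
    calc (f c ∖ g c) ⋏ ((f c' ⋏ g c') ⋏ f c')
        = (f c ∖ g c) ⋏ (f c' ⋏ (g c' ⋏ f c')) := by rw [wedge_assoc]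
      _ = ((f c ∖ g c) ⋏ f c') ⋏ (g c' ⋏ f c') := (wedge_assoc _ _ _).symm
      _ = zero := by rw [cross_df c hc c' hc' hne, zero_wedge]
  have hxy : joinList (l.map f) ⋏ joinList (l.map g)
      = joinList (l.map (fun c => f c ⋏ g c)) :=
    joinList_wedge_joinList hfg hl
  have hxyx : (joinList (l.map f) ⋏ joinList (l.map g)) ⋏ joinList (l.map f)
      = joinList (l.map (fun c => (f c ⋏ g c) ⋏ f c)) := by
    rw [hxy]
    exact joinList_wedge_joinList (fun c hc c' hc' hne => by
      calc (f c ⋏ g c) ⋏ f c' = f c ⋏ (g c ⋏ f c') := wedge_assoc _ _ _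
        _ = zero := by rw [hgf c hc c' hc' hne, wedge_zero]) hl
  have h1 : joinList (l.map f) ⋏ joinList (l.map (fun c => f c ∖ g c))
      = joinList (l.map (fun c => f c ∖ g c)) := by
    rw [joinList_wedge_joinList cross_fd hl]
    exact joinList_map_congr (fun c _ => wedge_diff _ _)
  have h2 : ((joinList (l.map f) ⋏ joinList (l.map g)) ⋏ joinList (l.map f)) ⋏
      joinList (l.map (fun c => f c ∖ g c)) = zero := by
    rw [hxyx, joinList_wedge_joinList cross_Ad hl]
    apply joinList_all_zero
    intro b hb
    obtain ⟨c, hc, rfl⟩ := List.mem_map.1 hb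
    exact diff_ax2 (f c) (g c)
  have h3 : ((joinList (l.map f) ⋏ joinList (l.map g)) ⋏ joinList (l.map f)) ⋎
      joinList (l.map (fun c => f c ∖ g c)) = joinList (l.map f) := by
    rw [hxyx, joinList_vee_joinList
      (fun c hc c' hc' hne => ⟨cross_Ad c hc c' hc' hne, cross_dA c' hc' c hc (Ne.symm hne)⟩) hl]
    exact joinList_map_congr (fun c _ => diff_ax1 (f c) (g c))
  exact (diff_unique h1 h2 h3).symm

end SBA
/-! ### The primitive rectangular skew Boolean algebra on `Option (α × α)` -/

abbrev Prim (α : Type u) : Type u := Option (α × α)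

namespace Prim

variable {α : Type u}

def pwedge : Prim α → Prim α → Prim α
  | some p, some q => some (p.1, q.2)
  | _, _ => none

def pvee : Prim α → Prim α → Prim α
  | some p, some q => some (q.1, p.2)
  | some p, none => some p
  | none, x => x

def pdiff : Prim α → Prim α → Prim α
  | x, none => x
  | _, some _ => none

instance instSBA : SBA (Prim α) where
  wedge := pwedge
  vee := pvee
  diff := pdiff
  zero := none
  wedge_assoc := by rintro (_|⟨a,b⟩) (_|⟨c,d⟩) (_|⟨e,f⟩) <;> rfl
  vee_assoc := by rintro (_|⟨a,b⟩) (_|⟨c,d⟩) (_|⟨e,f⟩) <;> rfl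
  absorb1 := by rintro (_|⟨a,b⟩) (_|⟨c,d⟩) <;> rfl
  absorb2 := by rintro (_|⟨a,b⟩) (_|⟨c,d⟩) <;> rfl
  absorb3 := by rintro (_|⟨a,b⟩) (_|⟨c,d⟩) <;> rfl
  absorb4 := by rintro (_|⟨a,b⟩) (_|⟨c,d⟩) <;> rfl
  sdistrib1 := by rintro (_|⟨a,b⟩) (_|⟨c,d⟩) (_|⟨e,f⟩) <;> rfl
  sdistrib2 := by rintro (_|⟨a,b⟩) (_|⟨c,d⟩) (_|⟨e,f⟩) <;> rfl
  zero_wedge := by rintro (_|⟨a,b⟩) <;> rfl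
  wedge_zero := by rintro (_|⟨a,b⟩) <;> rfl
  zero_vee := by rintro (_|⟨a,b⟩) <;> rfl
  vee_zero := by rintro (_|⟨a,b⟩) <;> rfl
  diff_ax1 := by rintro (_|⟨a,b⟩) (_|⟨c,d⟩) <;> rfl
  diff_ax2 := by rintro (_|⟨a,b⟩) (_|⟨c,d⟩) <;> rfl
  diff_ax3 := by rintro (_|⟨a,b⟩) (_|⟨c,d⟩) <;> rfl

@[simp] theorem zero_def : (SBA.zero : Prim α) = none := rfl

@[simp] theorem wedge_some (p q : α × α) :
    (some p ⋏ some q : Prim α) = some (p.1, q.2) := rfl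

@[simp] theorem wedge_none (x : Prim α) : (x ⋏ none : Prim α) = none := by
  cases x <;> rfl

@[simp] theorem none_wedge (x : Prim α) : (none ⋏ x : Prim α) = none := by
  cases x <;> rfl

@[simp] theorem vee_some_some (p q : α × α) :
    (some p ⋎ some q : Prim α) = some (q.1, p.2) := rfl

@[simp] theorem vee_none (x : Prim α) : (x ⋎ none : Prim α) = x := by
  cases x <;> rfl

@[simp] theorem none_vee (x : Prim α) : (none ⋎ x : Prim α) = x := rfl

@[simp] theorem diff_none (x : Prim α) : (x ∖ none : Prim α) = x := by
  cases x <;> rfl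

@[simp] theorem diff_some (x : Prim α) (p : α × α) :
    (x ∖ some p : Prim α) = none := by
  cases x <;> rfl

end Prim
/-! ### The term model: free skew Boolean algebras -/

inductive Trm (n : ℕ) : Type u
  | var : Fin n → Trm n
  | zer : Trm n
  | wdg : Trm n → Trm n → Trm n
  | vv : Trm n → Trm n → Trm n
  | dff : Trm n → Trm n → Trm n

namespace Trm

def evalT {n : ℕ} {T : Type u} [SBA T] (env : Fin n → T) : Trm.{u} n → T
  | var i => env i
  | zer => SBA.zero
  | wdg a b => evalT env a ⋏ evalT env b
  | vv a b => evalT env a ⋎ evalT env b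
  | dff a b => evalT env a ∖ evalT env b

def trel {n : ℕ} (t s : Trm.{u} n) : Prop :=
  ∀ (T : Type u) (instT : SBA T) (env : Fin n → T),
    @evalT n T instT env t = @evalT n T instT env s

instance tsetoid (n : ℕ) : Setoid (Trm.{u} n) :=
  ⟨trel, ⟨fun _ _ _ _ => rfl, fun h T i e => (h T i e).symm,
    fun h1 h2 T i e => (h1 T i e).trans (h2 T i e)⟩⟩

end Trm

def FreeS (n : ℕ) : Type u := Quotient (Trm.tsetoid.{u} n)

namespace FreeS

variable {n : ℕ}

instance instSBA : SBA (FreeS n) where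
  wedge := Quotient.map₂ Trm.wdg (fun a₁ a₂ ha b₁ b₂ hb T i e => by
    show _ ⋏ _ = _ ⋏ _
    rw [ha T i e, hb T i e])
  vee := Quotient.map₂ Trm.vv (fun a₁ a₂ ha b₁ b₂ hb T i e => by
    show _ ⋎ _ = _ ⋎ _
    rw [ha T i e, hb T i e])
  diff := Quotient.map₂ Trm.dff (fun a₁ a₂ ha b₁ b₂ hb T i e => by
    show _ ∖ _ = _ ∖ _
    rw [ha T i e, hb T i e])
  zero := ⟦Trm.zer⟧
  wedge_assoc x y z := Quotient.inductionOn₃ x y z fun a b c =>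
    Quotient.sound fun T i e => SBA.wedge_assoc _ _ _
  vee_assoc x y z := Quotient.inductionOn₃ x y z fun a b c =>
    Quotient.sound fun T i e => SBA.vee_assoc _ _ _
  absorb1 x y := Quotient.inductionOn₂ x y fun a b =>
    Quotient.sound fun T i e => SBA.absorb1 _ _
  absorb2 x y := Quotient.inductionOn₂ x y fun a b =>
    Quotient.sound fun T i e => SBA.absorb2 _ _
  absorb3 x y := Quotient.inductionOn₂ x y fun a b =>
    Quotient.sound fun T i e => SBA.absorb3 _ _
  absorb4 x y := Quotient.inductionOn₂ x y fun a b =>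
    Quotient.sound fun T i e => SBA.absorb4 _ _
  sdistrib1 x y z := Quotient.inductionOn₃ x y z fun a b c =>
    Quotient.sound fun T i e => SBA.sdistrib1 _ _ _
  sdistrib2 x y z := Quotient.inductionOn₃ x y z fun a b c =>
    Quotient.sound fun T i e => SBA.sdistrib2 _ _ _
  zero_wedge x := Quotient.inductionOn x fun a =>
    Quotient.sound fun T i e => SBA.zero_wedge _
  wedge_zero x := Quotient.inductionOn x fun a =>
    Quotient.sound fun T i e => SBA.wedge_zero _
  zero_vee x := Quotient.inductionOn x fun a =>
    Quotient.sound fun T i e => SBA.zero_vee _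
  vee_zero x := Quotient.inductionOn x fun a =>
    Quotient.sound fun T i e => SBA.vee_zero _
  diff_ax1 x y := Quotient.inductionOn₂ x y fun a b =>
    Quotient.sound fun T i e => SBA.diff_ax1 _ _
  diff_ax2 x y := Quotient.inductionOn₂ x y fun a b =>
    Quotient.sound fun T i e => SBA.diff_ax2 _ _
  diff_ax3 x y := Quotient.inductionOn₂ x y fun a b =>
    Quotient.sound fun T i e => SBA.diff_ax3 _ _

def xgen (n : ℕ) : Fin n → FreeS n := fun i => ⟦Trm.var i⟧

theorem mk_wedge (a b : Trm n) : (⟦a⟧ ⋏ ⟦b⟧ : FreeS n) = ⟦Trm.wdg a b⟧ := rfl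
theorem mk_vee (a b : Trm n) : (⟦a⟧ ⋎ ⟦b⟧ : FreeS n) = ⟦Trm.vv a b⟧ := rfl
theorem mk_diff (a b : Trm n) : (⟦a⟧ ∖ ⟦b⟧ : FreeS n) = ⟦Trm.dff a b⟧ := rfl

theorem generates : Generates (Set.range (xgen.{u} n)) := by
  intro T hX h0 hcl
  apply Set.eq_univ_of_forall
  intro q
  refine Quotient.inductionOn q ?_
  intro t
  induction t with
  | var i => exact hX ⟨i, rfl⟩
  | zer => exact h0
  | wdg a b iha ihb => exact (hcl _ _ iha ihb).1
  | vv a b iha ihb => exact (hcl _ _ iha ihb).2.1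
  | dff a b iha ihb => exact (hcl _ _ iha ihb).2.2

def evalF {T : Type u} [instT : SBA T] (env : Fin n → T) : FreeS n → T :=
  Quotient.lift (Trm.evalT env) (fun _ _ h => h T instT env)

@[simp] theorem evalF_mk {T : Type u} [SBA T] (env : Fin n → T) (t : Trm n) :
    evalF env (⟦t⟧ : FreeS n) = Trm.evalT env t := rfl

@[simp] theorem evalF_xgen {T : Type u} [SBA T] (env : Fin n → T) (i : Fin n) :
    evalF env (xgen n i) = env i := rfl

@[simp] theorem evalF_zero {T : Type u} [SBA T] (env : Fin n → T) :
    evalF env (SBA.zero : FreeS n) = SBA.zero := rfl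

@[simp] theorem evalF_wedge {T : Type u} [SBA T] (env : Fin n → T) (p q : FreeS n) :
    evalF env (p ⋏ q) = evalF env p ⋏ evalF env q :=
  Quotient.inductionOn₂ p q fun _ _ => rfl

@[simp] theorem evalF_vee {T : Type u} [SBA T] (env : Fin n → T) (p q : FreeS n) :
    evalF env (p ⋎ q) = evalF env p ⋎ evalF env q :=
  Quotient.inductionOn₂ p q fun _ _ => rfl

@[simp] theorem evalF_diff {T : Type u} [SBA T] (env : Fin n → T) (p q : FreeS n) :
    evalF env (p ∖ q) = evalF env p ∖ evalF env q :=
  Quotient.inductionOn₂ p q fun _ _ => rfl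

theorem evalF_isHom {T : Type u} [SBA T] (env : Fin n → T) : IsHom (evalF env) :=
  ⟨fun a b => evalF_wedge env a b, fun a b => evalF_vee env a b,
   fun a b => evalF_diff env a b, rfl⟩

theorem evalF_joinList {T : Type u} [SBA T] (env : Fin n → T) (L : List (FreeS n)) :
    evalF env (joinList L) = joinList (L.map (evalF env)) := by
  induction L with
  | nil => rfl
  | cons a l ih => simp only [joinList_cons, List.map_cons, evalF_vee, ih]

theorem xgen_injective (n : ℕ) : Function.Injective (xgen.{u} n) := by
  intro i j h
  by_contra hne
  have hrel : Trm.trel (Trm.var i) (Trm.var j) := Quotient.exact h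
  have hji : ¬ j = i := fun hj => hne hj.symm
  have h2 := hrel (Prim PUnit.{u+1}) Prim.instSBA
    (fun k => if k = i then some (PUnit.unit, PUnit.unit) else none)
  simpa [Trm.evalT, hji] using h2

theorem freelyGenerates : FreelyGenerates (FreeS.{u} n) (Set.range (xgen.{u} n)) := by
  constructor
  · exact generates
  · intro T instT g
    refine ⟨evalF (fun i => g ⟨xgen n i, ⟨i, rfl⟩⟩), evalF_isHom _, ?_⟩
    rintro ⟨v, hv⟩
    obtain ⟨i, rfl⟩ := hv
    rfl

end FreeS
namespace SBA

variable {S : Type u} [SBA S]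

attribute [local simp] wedge_assoc zero_wedge wedge_zero zero_vee vee_zero
  wedge_self wedge_wedge_self vee_self pair_idem' pair_idem

theorem perp_of_sand_zero {r t : S} (h : r ⋏ t ⋏ r = zero) :
    t ⋏ r = zero ∧ r ⋏ t = zero := by
  have h1 : t ⋏ r = zero := by
    calc t ⋏ r = (t ⋏ r) ⋏ (t ⋏ r) := (wedge_self _).symm
      _ = t ⋏ ((r ⋏ t) ⋏ r) := by simp
      _ = t ⋏ (r ⋏ t ⋏ r) := by rw [wedge_assoc]
      _ = zero := by rw [h, wedge_zero]
  exact ⟨h1, perp_symm h1⟩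

theorem sand_zero_of_perp {r t : S} (h : t ⋏ r = zero) : r ⋏ t ⋏ r = zero := by
  rw [perp_symm h, zero_wedge]

/-- The key dichotomy for the trace of `s` on an atom `a`. -/
theorem rho_atom_cases {a : S} (ha : IsAtom a) (s : S) :
    (a ⋏ s ⋏ a = zero ∧ s ⋏ a ⋏ s = zero) ∨
    (a ⋏ s ⋏ a = a ∧ Drel (s ⋏ a ⋏ s) a) := by
  have hle : nle (a ⋏ s ⋏ a) a := ⟨by simp, by simp⟩
  rcases ha.2 _ hle with h0 | h1
  · left
    refine ⟨h0, ?_⟩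
    calc s ⋏ a ⋏ s = (s ⋏ a ⋏ s) ⋏ (s ⋏ a ⋏ s) := (wedge_self _).symm
      _ = s ⋏ ((a ⋏ s ⋏ a) ⋏ s) := by simp
      _ = zero := by rw [h0, zero_wedge, wedge_zero]
  · right
    refine ⟨h1, ⟨by simp, ?_⟩⟩
    have haux : a ⋏ (s ⋏ a) = a := by rw [← wedge_assoc]; exact h1
    calc a ⋏ (s ⋏ a ⋏ s) ⋏ a = a ⋏ (s ⋏ (a ⋏ (s ⋏ a))) := by simp
      _ = a := by rw [haux]; exact haux

theorem atom_ne_zero {a : S} (ha : IsAtom a) : a ≠ zero := ha.1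

theorem drel_ne_zero {a b : S} (ha : IsAtom a) (hb : Drel b a) : b ≠ zero := by
  intro h0
  exact ha.1 (drel_zero (h0 ▸ hb))

/-- Every element `D`-related to an atom is an atom. -/
theorem atom_of_drel {a b : S} (ha : IsAtom a) (hb : Drel b a) : IsAtom b := by
  refine ⟨drel_ne_zero ha hb, ?_⟩
  intro x hx
  by_cases hx0 : x = zero
  · exact Or.inl hx0
  right
  have hy : nle (a ⋏ x ⋏ a) a := ⟨by simp, by simp⟩
  rcases ha.2 _ hy with h0 | h1
  · exfalso
    have hax : a ⋏ x = zero := by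
      calc a ⋏ x = (a ⋏ x) ⋏ (a ⋏ x) := (wedge_self _).symm
        _ = (a ⋏ x ⋏ a) ⋏ x := by simp
        _ = zero := by rw [h0, zero_wedge]
    have hxa : x ⋏ a = zero := perp_symm hax
    have : x = zero := by
      calc x = x ⋏ b := hx.1.symm
        _ = x ⋏ (b ⋏ a ⋏ b) := by rw [hb.1]
        _ = ((x ⋏ b) ⋏ a) ⋏ b := by simp
        _ = zero := by rw [hx.1, hxa, zero_wedge]
    exact hx0 this
  · -- a ⋏ x ⋏ a = a
    rcases rho_atom_cases ha x with ⟨h0', _⟩ | ⟨_, hD⟩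
    · exact absurd (h1.symm.trans h0') ha.1
    -- z := x ⋏ a ⋏ x is D-related to a and ≤ x
    have hzx : nle (x ⋏ a ⋏ x) x := ⟨by simp, by simp⟩
    have hzb : nle (x ⋏ a ⋏ x) b := nle_trans hzx hx
    have hDzb : Drel (x ⋏ a ⋏ x) b := drel_trans hD (drel_symm hb)
    have hz : x ⋏ a ⋏ x = b := by
      calc x ⋏ a ⋏ x = (b ⋏ (x ⋏ a ⋏ x)) ⋏ b := by rw [hzb.2, hzb.1]
      _ = b := hDzb.2
    have hbx : nle b x := hz ▸ hzx
    exact nle_antisymm hx hbx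

/-- Atoms in different `D`-classes are orthogonal. -/
theorem atom_perp {a a' : S} (ha : IsAtom a) (ha' : IsAtom a')
    (h : ¬ Drel a a') : a ⋏ a' = zero := by
  have hp : nle (a ⋏ a' ⋏ a) a := ⟨by simp, by simp⟩
  have hr : nle (a' ⋏ a ⋏ a') a' := ⟨by simp, by simp⟩
  rcases ha.2 _ hp with h0 | h1
  · calc a ⋏ a' = (a ⋏ a') ⋏ (a ⋏ a') := (wedge_self _).symm
      _ = (a ⋏ a' ⋏ a) ⋏ a' := by simp
      _ = zero := by rw [h0, zero_wedge]
  · rcases ha'.2 _ hr with h0' | h1'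
    · have : a' ⋏ a = zero := by
        calc a' ⋏ a = (a' ⋏ a) ⋏ (a' ⋏ a) := (wedge_self _).symm
          _ = (a' ⋏ a ⋏ a') ⋏ a := by simp
          _ = zero := by rw [h0', zero_wedge]
      exact perp_symm this
    · exact absurd ⟨h1, h1'⟩ h

theorem perp_of_drel_right {x y z : S} (h : x ⋏ y = zero) (hz : Drel z y) :
    x ⋏ z = zero := by
  have h2 : (x ⋏ z) ⋏ y = zero := by
    apply perp_symm
    rw [← wedge_assoc, perp_symm h, zero_wedge]
  calc x ⋏ z = x ⋏ (z ⋏ y ⋏ z) := by rw [hz.1]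
    _ = ((x ⋏ z) ⋏ y) ⋏ z := by simp
    _ = zero := by rw [h2, zero_wedge]

/-- Elements of distinct atomic `D`-classes are orthogonal. -/
theorem class_perp {a a' b b' : S} (ha : IsAtom a) (ha' : IsAtom a')
    (hb : Drel b a) (hb' : Drel b' a') (h : ¬ Drel a a') : b ⋏ b' = zero := by
  have h1 : a ⋏ a' = zero := atom_perp ha ha' h
  have h2 : a ⋏ b' = zero := perp_of_drel_right h1 hb'
  have h3 : b' ⋏ a = zero := perp_symm h2
  have h4 : b' ⋏ b = zero := perp_of_drel_right h3 hb
  exact perp_symm h4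

/-- `T1`: if an atom `b` lies below `t` then any classmate `c` has full trace on `t`. -/
theorem trace_full {b t c : S} (hbt : nle b t) (hcb : Drel c b) :
    c ⋏ t ⋏ c = c := by
  have step : c = c ⋏ (c ⋏ t ⋏ c) := by
    calc c = (c ⋏ b ⋏ c) := hcb.1.symm
      _ = c ⋏ (b ⋏ t) ⋏ c := by rw [hbt.1]
      _ = (c ⋏ b ⋏ c) ⋏ (c ⋏ t ⋏ c) := by rw [← sandwich_wedge]
      _ = c ⋏ (c ⋏ t ⋏ c) := by rw [hcb.1]
  have hXc : nle (c ⋏ t ⋏ c) c := ⟨by simp, by simp⟩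
  calc c ⋏ t ⋏ c = (c ⋏ t ⋏ c) ⋏ c := hXc.1.symm
    _ = c ⋏ (c ⋏ t ⋏ c) := wedge_comm_of_nle hXc (nle_refl c)
    _ = c := step.symm

/-- Uniqueness: two classmate atoms below a common element coincide. -/
theorem atom_unique {a a' s : S} (ha : IsAtom a) (ha' : IsAtom a')
    (hD : Drel a a') (h1 : nle a s) (h2 : nle a' s) : a = a' := by
  have hcomm : a ⋏ a' = a' ⋏ a := wedge_comm_of_nle h1 h2
  have e1 : a ⋏ a' = a' := by
    calc a ⋏ a' = (a ⋏ a') ⋏ a' := by rw [wedge_assoc, wedge_self]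
      _ = (a' ⋏ a) ⋏ a' := by rw [hcomm]
      _ = a' := hD.2
  have e2 : a ⋏ a' = a := by
    calc a ⋏ a' = a ⋏ (a ⋏ a') := by rw [wedge_wedge_self]
      _ = a ⋏ (a' ⋏ a) := by rw [hcomm]
      _ = a := by rw [← wedge_assoc]; exact hD.1
  rw [← e2, e1]

theorem exists_atom_nle [Finite S] {s : S} (hs : s ≠ zero) :
    ∃ a : S, IsAtom a ∧ nle a s := by
  classical
  haveI := Fintype.ofFinite S
  have hA : s ∈ Finset.univ.filter (fun y => y ≠ zero ∧ nle y s) := by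
    simp [hs, nle_refl]
  obtain ⟨m, hm, hmin⟩ := Finset.exists_min_image
    (Finset.univ.filter (fun y => y ≠ zero ∧ nle y s))
    (fun y => (Finset.univ.filter (fun z => nle z y)).card) ⟨s, hA⟩
  simp only [Finset.mem_filter, Finset.mem_univ, true_and] at hm
  refine ⟨m, ⟨hm.1, ?_⟩, hm.2⟩
  intro x hx
  by_contra hbad
  push_neg at hbad
  obtain ⟨hx0, hxm⟩ := hbad
  have hxA : x ∈ Finset.univ.filter (fun y => y ≠ zero ∧ nle y s) := by
    simp only [Finset.mem_filter, Finset.mem_univ, true_and]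
    exact ⟨hx0, nle_trans hx hm.2⟩
  have hsub : Finset.univ.filter (fun z => nle z x) ⊂
      Finset.univ.filter (fun z => nle z m) := by
    rw [Finset.ssubset_def]
    constructor
    · intro z hz
      simp only [Finset.mem_filter, Finset.mem_univ, true_and] at hz ⊢
      exact nle_trans hz hx
    · intro hcontra
      have hmem : m ∈ Finset.univ.filter (fun z => nle z x) :=
        hcontra (by simp [nle_refl])
      simp only [Finset.mem_filter, Finset.mem_univ, true_and] at hmem
      exact hxm (nle_antisymm hx hmem)
  have hlt := Finset.card_lt_card hsub
  have h2 := hmin x hxA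
  omega

end SBA
namespace SBA

variable {S : Type u} [SBA S]

attribute [local simp] wedge_assoc zero_wedge wedge_zero zero_vee vee_zero
  wedge_self wedge_wedge_self vee_self pair_idem' pair_idem

def AtomS (S : Type u) [SBA S] : Type u := {a : S // IsAtom a}

instance [Finite S] : Finite (AtomS S) := Subtype.finite

def atomSetoid (S : Type u) [SBA S] : Setoid (AtomS S) :=
  ⟨fun a b => Drel a.1 b.1, ⟨fun _ => drel_refl _, drel_symm, drel_trans⟩⟩

def ClsS (S : Type u) [SBA S] : Type u := Quotient (atomSetoid S)

instance [Finite S] : Finite (ClsS S) := Quotient.finite _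

noncomputable def repC (c : ClsS S) : S := c.out.1

theorem repC_atom (c : ClsS S) : IsAtom (repC c) := c.out.2

theorem repC_drel (a : AtomS S) : Drel (repC (⟦a⟧ : ClsS S)) a.1 :=
  Quotient.mk_out (s := atomSetoid S) a

theorem repC_ndrel {c c' : ClsS S} (h : c ≠ c') : ¬ Drel (repC c) (repC c') := by
  intro hD
  apply h
  exact (Quotient.out_eq c).symm.trans ((Quotient.sound hD).trans (Quotient.out_eq c'))

noncomputable def piC (c : ClsS S) (s : S) : S := s ⋏ repC c ⋏ s

theorem piC_nle (c : ClsS S) (s : S) : nle (piC c s) s :=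
  ⟨by simp [piC], by simp [piC]⟩

theorem piC_cases (c : ClsS S) (s : S) :
    (piC c s = zero ∧ repC c ⋏ s ⋏ repC c = zero) ∨
    (Drel (piC c s) (repC c) ∧ repC c ⋏ s ⋏ repC c = repC c) := by
  rcases rho_atom_cases (repC_atom c) s with ⟨h1, h2⟩ | ⟨h1, h2⟩
  · exact Or.inl ⟨h2, h1⟩
  · exact Or.inr ⟨h2, h1⟩

theorem piC_atom {c : ClsS S} {s : S} (h : piC c s ≠ zero) :
    IsAtom (piC c s) ∧ Drel (piC c s) (repC c) := by
  rcases piC_cases c s with ⟨h1, _⟩ | ⟨h1, _⟩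
  · exact absurd h1 h
  · exact ⟨atom_of_drel (repC_atom c) h1, h1⟩

theorem piC_zero_iff (c : ClsS S) (s : S) :
    piC c s = zero ↔ repC c ⋏ s ⋏ repC c = zero := by
  constructor
  · intro h0
    rcases piC_cases c s with ⟨_, h2⟩ | ⟨h1, _⟩
    · exact h2
    · exact absurd (drel_zero (h0 ▸ h1)) (repC_atom c).1
  · intro hs
    rcases piC_cases c s with ⟨h1, _⟩ | ⟨_, h2⟩
    · exact h1
    · exact absurd (h2.symm.trans hs) (repC_atom c).1

theorem piC_zero (c : ClsS S) : piC c (zero : S) = zero := by simp [piC]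

theorem piC_perp {c c' : ClsS S} (h : c ≠ c') (s t : S) :
    piC c s ⋏ piC c' t = zero := by
  by_cases h1 : piC c s = zero
  · rw [h1, zero_wedge]
  by_cases h2 : piC c' t = zero
  · rw [h2, wedge_zero]
  exact class_perp (repC_atom c) (repC_atom c') (piC_atom h1).2 (piC_atom h2).2
    (repC_ndrel h)

noncomputable def clsList (S : Type u) [SBA S] [Finite S] : List (ClsS S) :=
  letI := Fintype.ofFinite (ClsS S)
  (Finset.univ : Finset (ClsS S)).toList

theorem clsList_nodup [Finite S] : (clsList S).Nodup := by
  unfold clsList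
  exact Finset.nodup_toList _

theorem mem_clsList [Finite S] (c : ClsS S) : c ∈ clsList S := by
  unfold clsList
  simp

/-- Decomposition: every element is the join of its atomic components. -/
theorem eq_joinList_piC [Finite S] (s : S) :
    s = joinList ((clsList S).map (fun c => piC c s)) := by
  have hJle : nle (joinList ((clsList S).map (fun c => piC c s))) s := by
    apply nle_joinList
    rintro b hb
    obtain ⟨c, _, rfl⟩ := List.mem_map.1 hb
    exact piC_nle c s
  have hsand : s ⋏ joinList ((clsList S).map (fun c => piC c s)) ⋏ s
      = joinList ((clsList S).map (fun c => piC c s)) := by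
    rw [hJle.2, hJle.1]
  by_cases hd : s ∖ joinList ((clsList S).map (fun c => piC c s)) = zero
  · have h1 := diff_ax1 s (joinList ((clsList S).map (fun c => piC c s)))
    rw [hsand, hd, vee_zero] at h1
    exact h1.symm
  · exfalso
    have hdJ : (s ∖ joinList ((clsList S).map (fun c => piC c s))) ⋏
        joinList ((clsList S).map (fun c => piC c s)) = zero := by
      have := diff_ax3 s (joinList ((clsList S).map (fun c => piC c s)))
      rwa [hsand] at this
    obtain ⟨a0, ha0, ha0d⟩ := exists_atom_nle hd
    have ha0s : nle a0 s := nle_trans ha0d (nle_diff s _)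
    have hrep : Drel (repC (⟦⟨a0, ha0⟩⟧ : ClsS S)) a0 := repC_drel ⟨a0, ha0⟩
    have htr : repC (⟦⟨a0, ha0⟩⟧ : ClsS S) ⋏ s ⋏ repC (⟦⟨a0, ha0⟩⟧ : ClsS S)
        = repC (⟦⟨a0, ha0⟩⟧ : ClsS S) := trace_full ha0s hrep
    have hpne : piC (⟦⟨a0, ha0⟩⟧ : ClsS S) s ≠ zero := by
      intro h0
      exact (repC_atom (⟦⟨a0, ha0⟩⟧ : ClsS S)).1
        (htr.symm.trans ((piC_zero_iff _ _).1 h0))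
    obtain ⟨hatom, hdrel⟩ := piC_atom hpne
    have hDa : Drel (piC (⟦⟨a0, ha0⟩⟧ : ClsS S) s) a0 := drel_trans hdrel hrep
    have heq : piC (⟦⟨a0, ha0⟩⟧ : ClsS S) s = a0 :=
      atom_unique hatom ha0 hDa (piC_nle _ s) ha0s
    have hmem : piC (⟦⟨a0, ha0⟩⟧ : ClsS S) s ∈
        (clsList S).map (fun c => piC c s) :=
      List.mem_map.2 ⟨_, mem_clsList _, rfl⟩
    have haJ : nle (piC (⟦⟨a0, ha0⟩⟧ : ClsS S) s)
        (joinList ((clsList S).map (fun c => piC c s))) := by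
      apply nle_joinList_of_mem hmem
      rintro b hb
      obtain ⟨c', _, rfl⟩ := List.mem_map.1 hb
      by_cases hcc : c' = (⟦⟨a0, ha0⟩⟧ : ClsS S)
      · subst hcc; exact Or.inl rfl
      · exact Or.inr ⟨piC_perp (fun h => hcc h.symm) s s, piC_perp hcc s s⟩
    rw [heq] at haJ
    have : a0 = zero := by
      calc a0 = a0 ⋏ joinList ((clsList S).map (fun c => piC c s)) := haJ.1.symm
        _ = (a0 ⋏ (s ∖ joinList ((clsList S).map (fun c => piC c s)))) ⋏
            joinList ((clsList S).map (fun c => piC c s)) := by rw [ha0d.1]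
        _ = a0 ⋏ ((s ∖ joinList ((clsList S).map (fun c => piC c s))) ⋏
            joinList ((clsList S).map (fun c => piC c s))) := wedge_assoc _ _ _
        _ = zero := by rw [hdJ, wedge_zero]
    exact ha0.1 this

/-- The atomic component of `t` in the class of an atom `b ≤ t` is `b` itself. -/
theorem piC_of_atom_nle [Finite S] {b t : S} (hb : IsAtom b) (hbt : nle b t) :
    piC (⟦⟨b, hb⟩⟧ : ClsS S) t = b := by
  have hrep : Drel (repC (⟦⟨b, hb⟩⟧ : ClsS S)) b := repC_drel ⟨b, hb⟩
  have htr := trace_full hbt hrep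
  have hpne : piC (⟦⟨b, hb⟩⟧ : ClsS S) t ≠ zero := by
    intro h0
    exact (repC_atom (⟦⟨b, hb⟩⟧ : ClsS S)).1 (htr.symm.trans ((piC_zero_iff _ _).1 h0))
  obtain ⟨hatom, hdrel⟩ := piC_atom hpne
  exact atom_unique hatom hb (drel_trans hdrel hrep) (piC_nle _ t) hbt

/-- `T2`, left version. -/
theorem t2_left [Finite S] {b t x : S} (hb : IsAtom b) (hbt : nle b t)
    (hx : Drel x b) : t ⋏ x = b ⋏ x := by
  conv_lhs => rw [eq_joinList_piC t]
  rw [joinList_wedge, List.map_map,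
    joinList_map_single (β := ClsS S) (l := clsList S) (c := (⟦⟨b, hb⟩⟧ : ClsS S)) clsList_nodup (mem_clsList _) ?_]
  · show piC (⟦⟨b, hb⟩⟧ : ClsS S) t ⋏ x = b ⋏ x
    rw [piC_of_atom_nle hb hbt]
  · intro c' _ hne
    show piC c' t ⋏ x = zero
    by_cases h1 : piC c' t = zero
    · rw [h1, zero_wedge]
    · exact class_perp (repC_atom c') (repC_atom (⟦⟨b, hb⟩⟧ : ClsS S))
        (piC_atom h1).2 (drel_trans hx (drel_symm (repC_drel ⟨b, hb⟩)))
        (repC_ndrel hne)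

/-- `T2`, right version. -/
theorem t2_right [Finite S] {b t x : S} (hb : IsAtom b) (hbt : nle b t)
    (hx : Drel x b) : x ⋏ t = x ⋏ b := by
  conv_lhs => rw [eq_joinList_piC t]
  rw [wedge_joinList, List.map_map,
    joinList_map_single (β := ClsS S) (l := clsList S) (c := (⟦⟨b, hb⟩⟧ : ClsS S)) clsList_nodup (mem_clsList _) ?_]
  · show x ⋏ piC (⟦⟨b, hb⟩⟧ : ClsS S) t = x ⋏ b
    rw [piC_of_atom_nle hb hbt]
  · intro c' _ hne
    show x ⋏ piC c' t = zero
    by_cases h1 : piC c' t = zero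
    · rw [h1, wedge_zero]
    · exact class_perp (repC_atom (⟦⟨b, hb⟩⟧ : ClsS S)) (repC_atom c')
        (drel_trans hx (drel_symm (repC_drel ⟨b, hb⟩))) (piC_atom h1).2
        (repC_ndrel (fun h => hne h.symm))

end SBA
namespace SBA

variable {S : Type u} [SBA S] [Finite S]

theorem piC_wedge (c : ClsS S) (s t : S) :
    piC c (s ⋏ t) = piC c s ⋏ piC c t := by
  by_cases hA0 : piC c s = zero
  · have hs := (piC_zero_iff c s).1 hA0
    have : repC c ⋏ (s ⋏ t) ⋏ repC c = zero := by
      rw [← sandwich_wedge, hs, zero_wedge]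
    rw [(piC_zero_iff c (s ⋏ t)).2 this, hA0, zero_wedge]
  by_cases hB0 : piC c t = zero
  · have ht := (piC_zero_iff c t).1 hB0
    have : repC c ⋏ (s ⋏ t) ⋏ repC c = zero := by
      rw [← sandwich_wedge, ht, wedge_zero]
    rw [(piC_zero_iff c (s ⋏ t)).2 this, hB0, wedge_zero]
  obtain ⟨hAatom, hAD⟩ := piC_atom hA0
  obtain ⟨hBatom, hBD⟩ := piC_atom hB0
  have hAs : nle (piC c s) s := piC_nle c s
  have hBt : nle (piC c t) t := piC_nle c t
  have hAB : Drel (piC c s) (piC c t) := drel_trans hAD (drel_symm hBD)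
  have step1 : (s ⋏ t) ⋏ repC c = piC c s ⋏ repC c := by
    calc (s ⋏ t) ⋏ repC c = s ⋏ (t ⋏ repC c) := wedge_assoc _ _ _
      _ = s ⋏ (piC c t ⋏ repC c) := by
          rw [t2_left hBatom hBt (drel_symm hBD)]
      _ = piC c s ⋏ (piC c t ⋏ repC c) := by
          rw [t2_left hAatom hAs (drel_trans (drel_wedge hBD) (drel_symm hAB))]
      _ = (piC c s ⋏ piC c t) ⋏ repC c := (wedge_assoc _ _ _).symm
      _ = piC c s ⋏ repC c := by rw [drel_collapse hAB hBD]
  have step3 : (piC c s ⋏ repC c) ⋏ (s ⋏ t) = piC c s ⋏ piC c t := by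
    calc (piC c s ⋏ repC c) ⋏ (s ⋏ t)
        = ((piC c s ⋏ repC c) ⋏ s) ⋏ t := (wedge_assoc _ _ _).symm
      _ = ((piC c s ⋏ repC c) ⋏ piC c s) ⋏ t := by
          rw [t2_right hAatom hAs (drel_wedge hAD)]
      _ = piC c s ⋏ t := by rw [hAD.1]
      _ = piC c s ⋏ piC c t := t2_right hBatom hBt hAB
  show (s ⋏ t) ⋏ repC c ⋏ (s ⋏ t) = _
  rw [step1, step3]

theorem piC_vee_right (c : ClsS S) (s t : S) (hB0 : piC c t = zero) :
    piC c (s ⋎ t) = piC c s := by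
  have ht := (piC_zero_iff c t).1 hB0
  obtain ⟨htr, hrt⟩ := perp_of_sand_zero ht
  by_cases hA0 : piC c s = zero
  · have hs := (piC_zero_iff c s).1 hA0
    have : repC c ⋏ (s ⋎ t) ⋏ repC c = zero := by
      rw [sandwich_vee, hs, ht, vee_zero]
    rw [(piC_zero_iff c (s ⋎ t)).2 this, hA0]
  obtain ⟨hAatom, hAD⟩ := piC_atom hA0
  have hAs : nle (piC c s) s := piC_nle c s
  have e1 : (s ⋎ t) ⋏ repC c = piC c s ⋏ repC c := by
    calc (s ⋎ t) ⋏ repC c = (s ⋏ repC c) ⋎ (t ⋏ repC c) := sdistrib2 _ _ _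
      _ = (piC c s ⋏ repC c) ⋎ zero := by
          rw [t2_left hAatom hAs (drel_symm hAD), htr]
      _ = piC c s ⋏ repC c := vee_zero _
  have e2 : (piC c s ⋏ repC c) ⋏ (s ⋎ t) = piC c s := by
    calc (piC c s ⋏ repC c) ⋏ (s ⋎ t)
        = ((piC c s ⋏ repC c) ⋏ s) ⋎ ((piC c s ⋏ repC c) ⋏ t) := sdistrib1 _ _ _
      _ = ((piC c s ⋏ repC c) ⋏ piC c s) ⋎ ((piC c s ⋏ repC c) ⋏ t) := by
          rw [t2_right hAatom hAs (drel_wedge hAD)]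
      _ = piC c s ⋎ (piC c s ⋏ (repC c ⋏ t)) := by rw [hAD.1, wedge_assoc]
      _ = piC c s := by rw [hrt, wedge_zero, vee_zero]
  show (s ⋎ t) ⋏ repC c ⋏ (s ⋎ t) = _
  rw [e1, e2]

theorem piC_vee_left (c : ClsS S) (s t : S) (hA0 : piC c s = zero) :
    piC c (s ⋎ t) = piC c t := by
  have hs := (piC_zero_iff c s).1 hA0
  obtain ⟨hsr, hrs⟩ := perp_of_sand_zero hs
  by_cases hB0 : piC c t = zero
  · have ht := (piC_zero_iff c t).1 hB0
    have : repC c ⋏ (s ⋎ t) ⋏ repC c = zero := by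
      rw [sandwich_vee, hs, ht, vee_zero]
    rw [(piC_zero_iff c (s ⋎ t)).2 this, hB0]
  obtain ⟨hBatom, hBD⟩ := piC_atom hB0
  have hBt : nle (piC c t) t := piC_nle c t
  have e1 : (s ⋎ t) ⋏ repC c = piC c t ⋏ repC c := by
    calc (s ⋎ t) ⋏ repC c = (s ⋏ repC c) ⋎ (t ⋏ repC c) := sdistrib2 _ _ _
      _ = zero ⋎ (piC c t ⋏ repC c) := by
          rw [t2_left hBatom hBt (drel_symm hBD), hsr]
      _ = piC c t ⋏ repC c := zero_vee _
  have e2 : (piC c t ⋏ repC c) ⋏ (s ⋎ t) = piC c t := by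
    calc (piC c t ⋏ repC c) ⋏ (s ⋎ t)
        = ((piC c t ⋏ repC c) ⋏ s) ⋎ ((piC c t ⋏ repC c) ⋏ t) := sdistrib1 _ _ _
      _ = ((piC c t ⋏ repC c) ⋏ s) ⋎ piC c t := by
          rw [t2_right hBatom hBt (drel_wedge hBD), hBD.1]
      _ = (piC c t ⋏ (repC c ⋏ s)) ⋎ piC c t := by rw [wedge_assoc]
      _ = piC c t := by rw [hrs, wedge_zero, zero_vee]
  show (s ⋎ t) ⋏ repC c ⋏ (s ⋎ t) = _
  rw [e1, e2]

theorem piC_vee_both (c : ClsS S) (s t : S) (hA0 : piC c s ≠ zero)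
    (hB0 : piC c t ≠ zero) :
    piC c (s ⋎ t) = piC c t ⋏ piC c s := by
  obtain ⟨hAatom, hAD⟩ := piC_atom hA0
  obtain ⟨hBatom, hBD⟩ := piC_atom hB0
  have hAs : nle (piC c s) s := piC_nle c s
  have hBt : nle (piC c t) t := piC_nle c t
  have hAB : Drel (piC c s) (piC c t) := drel_trans hAD (drel_symm hBD)
  have hBA : Drel (piC c t) (piC c s) := drel_symm hAB
  have e1 : (s ⋎ t) ⋏ repC c = piC c t ⋏ repC c := by
    calc (s ⋎ t) ⋏ repC c = (s ⋏ repC c) ⋎ (t ⋏ repC c) := sdistrib2 _ _ _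
      _ = (piC c s ⋏ repC c) ⋎ (piC c t ⋏ repC c) := by
          rw [t2_left hAatom hAs (drel_symm hAD), t2_left hBatom hBt (drel_symm hBD)]
      _ = (piC c t ⋏ repC c) ⋏ (piC c s ⋏ repC c) := by
          rw [drel_vee (drel_trans (drel_wedge hAD)
            (drel_trans (drel_symm hBA) (drel_symm (drel_wedge hBD))))]
      _ = piC c t ⋏ (repC c ⋏ piC c s ⋏ repC c) := by
          rw [wedge_assoc, wedge_assoc]
      _ = piC c t ⋏ repC c := by rw [(drel_symm hAD).1]
  have e2 : (piC c t ⋏ repC c) ⋏ (s ⋎ t) = piC c t ⋏ piC c s := by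
    calc (piC c t ⋏ repC c) ⋏ (s ⋎ t)
        = ((piC c t ⋏ repC c) ⋏ s) ⋎ ((piC c t ⋏ repC c) ⋏ t) := sdistrib1 _ _ _
      _ = ((piC c t ⋏ repC c) ⋏ piC c s) ⋎ ((piC c t ⋏ repC c) ⋏ piC c t) := by
          rw [t2_right hAatom hAs (drel_trans (drel_wedge hBD) (drel_trans hBD (drel_symm hAD))),
            t2_right hBatom hBt (drel_wedge hBD)]
      _ = (piC c t ⋏ piC c s) ⋎ piC c t := by
          rw [drel_collapse hBD (drel_symm hAD), hBD.1]
      _ = piC c t ⋏ (piC c t ⋏ piC c s) := by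
          rw [drel_vee (drel_wedge hBA)]
      _ = piC c t ⋏ piC c s := by rw [wedge_wedge_self]
  show (s ⋎ t) ⋏ repC c ⋏ (s ⋎ t) = _
  rw [e1, e2]

theorem piC_diff_zero (c : ClsS S) (s t : S) (hB0 : piC c t ≠ zero) :
    piC c (s ∖ t) = zero := by
  have ht : repC c ⋏ t ⋏ repC c = repC c := by
    rcases piC_cases c t with ⟨h1, _⟩ | ⟨_, h2⟩
    · exact absurd h1 hB0
    · exact h2
  apply (piC_zero_iff c (s ∖ t)).2
  rw [sandwich_diff, ht]
  rcases piC_cases c s with ⟨_, h2⟩ | ⟨_, h2⟩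
  · rw [h2, zero_diff]
  · rw [h2, diff_self]

theorem piC_diff_of_zero (c : ClsS S) (s t : S) (hB0 : piC c t = zero) :
    piC c (s ∖ t) = piC c s := by
  have ht := (piC_zero_iff c t).1 hB0
  have hsand : repC c ⋏ (s ∖ t) ⋏ repC c = repC c ⋏ s ⋏ repC c := by
    rw [sandwich_diff, ht, diff_zero]
  by_cases hA0 : piC c s = zero
  · have hs := (piC_zero_iff c s).1 hA0
    rw [(piC_zero_iff c (s ∖ t)).2 (hsand.trans hs), hA0]
  · obtain ⟨hAatom, hAD⟩ := piC_atom hA0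
    have hs : repC c ⋏ s ⋏ repC c = repC c := by
      rcases piC_cases c s with ⟨h1, _⟩ | ⟨_, h2⟩
      · exact absurd h1 hA0
      · exact h2
    have hne : piC c (s ∖ t) ≠ zero := by
      intro h0
      have := (piC_zero_iff c (s ∖ t)).1 h0
      rw [hsand, hs] at this
      exact (repC_atom c).1 this
    obtain ⟨hatom', hD'⟩ := piC_atom hne
    exact atom_unique hatom' hAatom (drel_trans hD' (drel_symm hAD))
      (nle_trans (piC_nle c (s ∖ t)) (nle_diff s t)) (piC_nle c s)

end SBA
namespace SBA

variable {S : Type u} [SBA S]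

attribute [local simp] wedge_assoc zero_wedge wedge_zero zero_vee vee_zero
  wedge_self wedge_wedge_self vee_self pair_idem' pair_idem

def meetList (a : S) (l : List S) : S := l.foldl (· ⋏ ·) a

@[simp] theorem meetList_nil (a : S) : meetList a ([] : List S) = a := rfl

@[simp] theorem meetList_cons (a b : S) (l : List S) :
    meetList a (b :: l) = meetList (a ⋏ b) l := rfl

theorem nle_meetList {e a : S} {l : List S} (ha : nle a e)
    (hl : ∀ v ∈ l, nle v e) : nle (meetList a l) e := by
  induction l generalizing a with
  | nil => exact ha
  | cons b t ih =>
    rw [meetList_cons]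
    exact ih (nle_wedge ha (hl b (by simp))) (fun v hv => hl v (by simp [hv]))

theorem meet_eq_top {e : S} : ∀ (l : List S) (a : S), nle a e →
    (∀ v ∈ l, nle v e) → meetList a l = e → a = e ∧ ∀ v ∈ l, v = e := by
  intro l
  induction l with
  | nil => intro a ha _ h; exact ⟨h, by simp⟩
  | cons b t ih =>
    intro a ha hl h
    rw [meetList_cons] at h
    obtain ⟨hab, ht⟩ := ih (a ⋏ b) (nle_wedge ha (hl b (by simp)))
      (fun v hv => hl v (by simp [hv])) h
    obtain ⟨ha', hb'⟩ := eq_top_of_wedge_eq_top ha (hl b (by simp)) hab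
    refine ⟨ha', ?_⟩
    intro v hv
    rcases List.mem_cons.1 hv with rfl | hv'
    · exact hb'
    · exact ht v hv'

theorem sand_meetList (e : S) : ∀ (l : List S) (a : S),
    e ⋏ (meetList a l) ⋏ e = meetList (e ⋏ a ⋏ e) (l.map (fun v => e ⋏ v ⋏ e)) := by
  intro l
  induction l with
  | nil => intro a; rfl
  | cons b t ih =>
    intro a
    rw [meetList_cons, List.map_cons, meetList_cons, ih (a ⋏ b), ← sandwich_wedge]

theorem sand_top_of_mem {W v : S} {a : S} {l : List S} (hW : W = meetList a l)
    (hv : v = a ∨ v ∈ l) : W ⋏ v ⋏ W = W := by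
  have hWle : ∀ x : S, nle (W ⋏ x ⋏ W) W := fun x => ⟨by simp, by simp⟩
  have htot : W ⋏ (meetList a l) ⋏ W = W := by rw [← hW]; simp
  rw [sand_meetList] at htot
  have := meet_eq_top (l.map (fun v => W ⋏ v ⋏ W)) (W ⋏ a ⋏ W) (hWle a)
    (by rintro u hu; obtain ⟨w, _, rfl⟩ := List.mem_map.1 hu; exact hWle w) htot
  rcases hv with rfl | hv
  · exact this.1
  · exact this.2 _ (List.mem_map.2 ⟨v, hv, rfl⟩)

theorem joinList_zero_mem {l : List S} (h : joinList l = zero) :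
    ∀ b ∈ l, b = zero := by
  induction l with
  | nil => simp
  | cons c t ih =>
    rw [joinList_cons] at h
    obtain ⟨h1, h2⟩ := eq_zero_of_vee_eq_zero h
    intro b hb
    rcases List.mem_cons.1 hb with rfl | hb'
    · exact h1
    · exact ih h2 b hb'

theorem perp_diff_joinList {W v : S} {L : List S} (hv : v ∈ L) :
    (W ∖ joinList L) ⋏ v = zero ∧ v ⋏ (W ∖ joinList L) = zero := by
  have h1 : (W ∖ joinList L) ⋏ joinList L = zero := diff_perp W (joinList L)
  have hDYD : ((W ∖ joinList L) ⋏ joinList L) ⋏ (W ∖ joinList L) = zero := by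
    rw [h1, zero_wedge]
  have hmap : ((W ∖ joinList L) ⋏ joinList L) ⋏ (W ∖ joinList L)
      = joinList (L.map (fun u => (W ∖ joinList L) ⋏ u ⋏ (W ∖ joinList L))) := by
    rw [wedge_joinList, joinList_wedge, List.map_map]
    rfl
  have hall := joinList_zero_mem (hmap ▸ hDYD)
  have hDvD : (W ∖ joinList L) ⋏ v ⋏ (W ∖ joinList L) = zero :=
    hall _ (List.mem_map.2 ⟨v, hv, rfl⟩)
  have hvD : v ⋏ (W ∖ joinList L) = zero := by
    calc v ⋏ (W ∖ joinList L)
        = (v ⋏ (W ∖ joinList L)) ⋏ (v ⋏ (W ∖ joinList L)) := (wedge_self _).symm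
      _ = v ⋏ (((W ∖ joinList L) ⋏ v) ⋏ (W ∖ joinList L)) := by simp
      _ = zero := by rw [show ((W ∖ joinList L) ⋏ v) ⋏ (W ∖ joinList L) = zero from hDvD,
          wedge_zero]
  exact ⟨perp_symm hvD, hvD⟩

/-- The sandwich of a class variable by the relative minterm is absorbed. -/
theorem mu_sand {W Y v : S} (hv : W ⋏ v ⋏ W = W) :
    (W ∖ Y) ⋏ v ⋏ (W ∖ Y) = W ∖ Y := by
  have h1 : (W ∖ Y) ⋏ W = W ∖ Y := diff_wedge W Y
  have h2 : W ⋏ (W ∖ Y) = W ∖ Y := wedge_diff W Y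
  calc (W ∖ Y) ⋏ v ⋏ (W ∖ Y) = (((W ∖ Y) ⋏ W) ⋏ v) ⋏ (W ⋏ (W ∖ Y)) := by
        rw [h1, h2]
    _ = (W ∖ Y) ⋏ (W ⋏ v ⋏ W) ⋏ (W ∖ Y) := by simp
    _ = (W ∖ Y) ⋏ W ⋏ (W ∖ Y) := by rw [hv]
    _ = W ∖ Y := by rw [h1, wedge_self]

/-- Multiplication rule for atomic generators within one class. -/
theorem gammaA1 {W Y xl xr xl' xr' : S} (hr : W ⋏ xr ⋏ W = W)
    (hl' : W ⋏ xl' ⋏ W = W) :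
    (xl ⋏ (W ∖ Y) ⋏ xr) ⋏ (xl' ⋏ (W ∖ Y) ⋏ xr') = xl ⋏ (W ∖ Y) ⋏ xr' := by
  have key : (W ∖ Y) ⋏ (xr ⋏ xl') ⋏ (W ∖ Y) = W ∖ Y := by
    calc (W ∖ Y) ⋏ (xr ⋏ xl') ⋏ (W ∖ Y)
        = ((W ∖ Y) ⋏ xr ⋏ (W ∖ Y)) ⋏ ((W ∖ Y) ⋏ xl' ⋏ (W ∖ Y)) := by
          rw [sandwich_wedge]
      _ = W ∖ Y := by rw [mu_sand hr, mu_sand hl', wedge_self]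
  calc (xl ⋏ (W ∖ Y) ⋏ xr) ⋏ (xl' ⋏ (W ∖ Y) ⋏ xr')
      = xl ⋏ ((W ∖ Y) ⋏ (xr ⋏ xl') ⋏ (W ∖ Y)) ⋏ xr' := by simp
    _ = xl ⋏ (W ∖ Y) ⋏ xr' := by rw [key]

/-- Orthogonality of atomic generators across classes. -/
theorem gammaA3 {m m' xl xr xl' xr' : S} (h : m ⋏ xl' = zero) :
    (xl ⋏ m ⋏ xr) ⋏ (xl' ⋏ m' ⋏ xr') = zero := by
  have hM : m ⋏ (xr ⋏ xl') ⋏ m' = zero := by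
    have hdec : ((xr ⋏ xl') ⋏ m ⋏ (xr ⋏ xl')) ⋎ ((xr ⋏ xl') ∖ m) = xr ⋏ xl' :=
      diff_ax1 _ _
    have hz1 : m ⋏ ((xr ⋏ xl') ∖ m) = zero := perp_diff _ _
    have hz2 : m ⋏ ((xr ⋏ xl') ⋏ m ⋏ (xr ⋏ xl')) = zero := by
      have : m ⋏ (xr ⋏ xl') ⋏ m = zero := by
        calc m ⋏ (xr ⋏ xl') ⋏ m = ((m ⋏ xr ⋏ m) ⋏ (m ⋏ xl' ⋏ m)) := by
              rw [sandwich_wedge]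
          _ = zero := by rw [show m ⋏ xl' ⋏ m = zero from by rw [h, zero_wedge],
              wedge_zero]
      calc m ⋏ ((xr ⋏ xl') ⋏ m ⋏ (xr ⋏ xl'))
          = (m ⋏ (xr ⋏ xl') ⋏ m) ⋏ (xr ⋏ xl') := by simp
        _ = zero := by rw [this, zero_wedge]
    calc m ⋏ (xr ⋏ xl') ⋏ m'
        = (m ⋏ (((xr ⋏ xl') ⋏ m ⋏ (xr ⋏ xl')) ⋎ ((xr ⋏ xl') ∖ m))) ⋏ m' := by
          rw [hdec]
      _ = ((m ⋏ ((xr ⋏ xl') ⋏ m ⋏ (xr ⋏ xl'))) ⋎ (m ⋏ ((xr ⋏ xl') ∖ m))) ⋏ m' := by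
          rw [sdistrib1]
      _ = zero := by rw [hz1, hz2, vee_zero, zero_wedge]
  calc (xl ⋏ m ⋏ xr) ⋏ (xl' ⋏ m' ⋏ xr')
      = xl ⋏ (m ⋏ (xr ⋏ xl') ⋏ m') ⋏ xr' := by simp
    _ = zero := by rw [hM]; simp

end SBA
namespace SBAEmb

open SBA

variable (S : Type u) [SBA S] [Finite S]

noncomputable instance : Fintype (AtomS S) := Fintype.ofFinite _

noncomputable def NN : ℕ := Fintype.card (AtomS S)

noncomputable def eA : AtomS S ≃ Fin (NN S) := Fintype.equivFin _

noncomputable def ι : AtomS S → Fin (NN S + 1) := fun a => Fin.castSucc (eA S a)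

theorem ι_inj : Function.Injective (ι S) := fun a b h =>
  (eA S).injective (Fin.castSucc_injective _ h)

noncomputable def vr : AtomS S → FreeS.{u} (NN S + 1) :=
  fun a => FreeS.xgen _ (ι S a)

open Classical in
noncomputable def atomsC (c : ClsS S) : List (AtomS S) :=
  (Finset.univ.filter (fun a : AtomS S => (⟦a⟧ : ClsS S) = c)).toList

open Classical in
noncomputable def outsC (c : ClsS S) : List (AtomS S) :=
  (Finset.univ.filter (fun a : AtomS S => (⟦a⟧ : ClsS S) ≠ c)).toList

theorem mem_atomsC {c : ClsS S} {a : AtomS S} :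
    a ∈ atomsC S c ↔ (⟦a⟧ : ClsS S) = c := by
  classical
  simp [atomsC]

theorem mem_outsC {c : ClsS S} {a : AtomS S} :
    a ∈ outsC S c ↔ (⟦a⟧ : ClsS S) ≠ c := by
  classical
  simp [outsC]

theorem cls_eq_iff (x : AtomS S) (c : ClsS S) :
    (⟦x⟧ : ClsS S) = c ↔ Drel x.1 (repC c) := by
  constructor
  · intro h
    have : (⟦x⟧ : ClsS S) = ⟦c.out⟧ := by rw [h]; exact (Quotient.out_eq c).symm
    exact Quotient.exact this
  · intro h
    have : (⟦x⟧ : ClsS S) = ⟦c.out⟧ := Quotient.sound h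
    rw [this]; exact Quotient.out_eq c

noncomputable def Wc (c : ClsS S) : FreeS.{u} (NN S + 1) :=
  meetList (vr S c.out) ((atomsC S c).map (vr S))

noncomputable def Yc (c : ClsS S) : FreeS.{u} (NN S + 1) :=
  joinList ((outsC S c).map (vr S))

noncomputable def muC (c : ClsS S) : FreeS.{u} (NN S + 1) :=
  Wc S c ∖ Yc S c

theorem Wc_sand {c : ClsS S} {a : AtomS S} (ha : (⟦a⟧ : ClsS S) = c) :
    Wc S c ⋏ vr S a ⋏ Wc S c = Wc S c :=
  sand_top_of_mem rfl (Or.inr (List.mem_map.2 ⟨a, (mem_atomsC S).2 ha, rfl⟩))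

theorem muC_perp {c : ClsS S} {a : AtomS S} (ha : (⟦a⟧ : ClsS S) ≠ c) :
    muC S c ⋏ vr S a = SBA.zero :=
  (perp_diff_joinList (List.mem_map.2 ⟨a, (mem_outsC S).2 ha, rfl⟩)).1

open Classical in
noncomputable def vrS (b : S) : FreeS.{u} (NN S + 1) :=
  if h : IsAtom b then vr S ⟨b, h⟩ else SBA.zero

open Classical in
noncomputable def eta0 (c : ClsS S) (b : S) : FreeS.{u} (NN S + 1) :=
  if b = SBA.zero then SBA.zero
  else vrS S (b ⋏ repC c) ⋏ muC S c ⋏ vrS S (repC c ⋏ b)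

noncomputable def eta (c : ClsS S) (s : S) : FreeS.{u} (NN S + 1) :=
  eta0 S c (piC c s)

noncomputable def Phi (s : S) : FreeS.{u} (NN S + 1) :=
  joinList ((clsList S).map (fun c => eta S c s))

end SBAEmb
namespace SBAEmb

open SBA

variable (S : Type u) [SBA S] [Finite S]

theorem coordL {c : ClsS S} {b : S} (hD : Drel b (repC c)) :
    Drel (b ⋏ repC c) (repC c) := drel_trans (drel_wedge hD) hD

theorem coordR {c : ClsS S} {b : S} (hD : Drel b (repC c)) :
    Drel (repC c ⋏ b) (repC c) := drel_wedge (drel_symm hD)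

theorem vrS_atom {b : S} (h : IsAtom b) : vrS S b = vr S ⟨b, h⟩ := dif_pos h

theorem sandL {c : ClsS S} {b : S} (hD : Drel b (repC c)) :
    Wc S c ⋏ vrS S b ⋏ Wc S c = Wc S c := by
  rw [vrS_atom S (atom_of_drel (repC_atom c) hD)]
  exact Wc_sand S ((cls_eq_iff S _ c).2 hD)

theorem muC_perp' {c c' : ClsS S} {b : S} (hD : Drel b (repC c'))
    (hne : c' ≠ c) : muC S c ⋏ vrS S b = SBA.zero := by
  rw [vrS_atom S (atom_of_drel (repC_atom c') hD)]
  apply muC_perp S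
  intro h
  exact hne ((((cls_eq_iff S _ c').2 hD).symm).trans h)

theorem eta0_zero (c : ClsS S) : eta0 S c SBA.zero = SBA.zero := if_pos rfl

theorem eta0_eq {c : ClsS S} {b : S} (hD : Drel b (repC c)) :
    eta0 S c b = vrS S (b ⋏ repC c) ⋏ muC S c ⋏ vrS S (repC c ⋏ b) :=
  if_neg (drel_ne_zero (repC_atom c) hD)

theorem gam_mul {c : ClsS S} {b b' : S} (hD : Drel b (repC c))
    (hD' : Drel b' (repC c)) :
    eta0 S c b ⋏ eta0 S c b' = eta0 S c (b ⋏ b') := by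
  have hbb' : Drel b b' := drel_trans hD (drel_symm hD')
  have hDm : Drel (b ⋏ b') (repC c) := drel_trans (drel_wedge hbb') hD
  rw [eta0_eq S hD, eta0_eq S hD', eta0_eq S hDm]
  have key := gammaA1 (W := Wc S c) (Y := Yc S c)
    (xl := vrS S (b ⋏ repC c)) (xr := vrS S (repC c ⋏ b))
    (xl' := vrS S (b' ⋏ repC c)) (xr' := vrS S (repC c ⋏ b'))
    (sandL S (coordR S hD)) (sandL S (coordL S hD'))
  rw [show (Wc S c ∖ Yc S c) = muC S c from rfl] at key
  rw [key]
  have e1 : (b ⋏ b') ⋏ repC c = b ⋏ repC c := drel_collapse hbb' hD'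
  have e2 : repC c ⋏ (b ⋏ b') = repC c ⋏ b' := by
    rw [← wedge_assoc]
    exact drel_collapse (drel_symm hD) hbb'
  rw [e1, e2]

theorem gam_drel {c : ClsS S} {b b' : S} (hD : Drel b (repC c))
    (hD' : Drel b' (repC c)) : Drel (eta0 S c b) (eta0 S c b') := by
  have hbb' : Drel b b' := drel_trans hD (drel_symm hD')
  have hDm : Drel (b ⋏ b') (repC c) := drel_trans (drel_wedge hbb') hD
  have hDm' : Drel (b' ⋏ b) (repC c) :=
    drel_trans (drel_wedge (drel_symm hbb')) hD'
  constructor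
  · rw [gam_mul S hD hD', gam_mul S hDm hD]
    rw [show (b ⋏ b') ⋏ b = b from hbb'.1]
  · rw [gam_mul S hD' hD, gam_mul S hDm' hD']
    rw [show (b' ⋏ b) ⋏ b' = b' from hbb'.2]

theorem gam_vee {c : ClsS S} {b b' : S} (hD : Drel b (repC c))
    (hD' : Drel b' (repC c)) :
    eta0 S c b ⋎ eta0 S c b' = eta0 S c (b' ⋏ b) := by
  rw [drel_vee (gam_drel S hD hD'), gam_mul S hD' hD]

theorem gam_diff {c : ClsS S} {b b' : S} (hD : Drel b (repC c))
    (hD' : Drel b' (repC c)) :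
    eta0 S c b ∖ eta0 S c b' = SBA.zero :=
  diff_eq_zero _ _ (gam_drel S hD hD').1

theorem eta_perp {c c' : ClsS S} (hne : c ≠ c') (s t : S) :
    eta S c s ⋏ eta S c' t = SBA.zero := by
  unfold eta
  by_cases hA : piC c s = SBA.zero
  · rw [hA, eta0_zero, zero_wedge]
  by_cases hB : piC c' t = SBA.zero
  · rw [hB, eta0_zero, wedge_zero]
  have hD := (piC_atom hA).2
  have hD' := (piC_atom hB).2
  rw [eta0_eq S hD, eta0_eq S hD']
  exact gammaA3 (muC_perp' S (coordL S hD') (fun h => hne h.symm))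

theorem eta_wedge (c : ClsS S) (s t : S) :
    eta S c (s ⋏ t) = eta S c s ⋏ eta S c t := by
  unfold eta
  rw [piC_wedge]
  by_cases hA : piC c s = SBA.zero
  · rw [hA, zero_wedge, eta0_zero, zero_wedge]
  by_cases hB : piC c t = SBA.zero
  · rw [hB, wedge_zero, eta0_zero, wedge_zero]
  exact (gam_mul S (piC_atom hA).2 (piC_atom hB).2).symm

theorem eta_vee (c : ClsS S) (s t : S) :
    eta S c (s ⋎ t) = eta S c s ⋎ eta S c t := by
  unfold eta
  by_cases hA : piC c s = SBA.zero
  · rw [piC_vee_left c s t hA, hA, eta0_zero, zero_vee]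
  by_cases hB : piC c t = SBA.zero
  · rw [piC_vee_right c s t hB, hB, eta0_zero, vee_zero]
  rw [piC_vee_both c s t hA hB]
  exact (gam_vee S (piC_atom hA).2 (piC_atom hB).2).symm

theorem eta_diff (c : ClsS S) (s t : S) :
    eta S c (s ∖ t) = eta S c s ∖ eta S c t := by
  unfold eta
  by_cases hB : piC c t = SBA.zero
  · rw [piC_diff_of_zero c s t hB, hB, eta0_zero, diff_zero]
  rw [piC_diff_zero c s t hB]
  by_cases hA : piC c s = SBA.zero
  · rw [hA, eta0_zero, zero_diff]
  rw [eta0_zero, gam_diff S (piC_atom hA).2 (piC_atom hB).2]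

theorem eta_zero (c : ClsS S) : eta S c SBA.zero = SBA.zero := by
  unfold eta
  rw [piC_zero, eta0_zero]

theorem Phi_wedge (s t : S) : Phi S (s ⋏ t) = Phi S s ⋏ Phi S t := by
  unfold Phi
  rw [joinList_wedge_joinList (fun c _ c' _ hne => eta_perp S hne s t) clsList_nodup]
  exact joinList_map_congr (fun c _ => eta_wedge S c s t)

theorem Phi_vee (s t : S) : Phi S (s ⋎ t) = Phi S s ⋎ Phi S t := by
  unfold Phi
  rw [joinList_vee_joinList
    (fun c _ c' _ hne => ⟨eta_perp S hne s t, eta_perp S (Ne.symm hne) t s⟩)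
    clsList_nodup]
  exact joinList_map_congr (fun c _ => eta_vee S c s t)

theorem Phi_diff (s t : S) : Phi S (s ∖ t) = Phi S s ∖ Phi S t := by
  unfold Phi
  rw [joinList_diff_joinList clsList_nodup
    (fun c hc c' hc' hne => eta_perp S hne s s)
    (fun c hc c' hc' hne => eta_perp S hne s t)
    (fun c hc c' hc' hne => eta_perp S hne t s)]
  exact joinList_map_congr (fun c _ => eta_diff S c s t)

theorem Phi_zero : Phi S SBA.zero = SBA.zero := by
  unfold Phi
  apply joinList_all_zero
  intro b hb
  obtain ⟨c, _, rfl⟩ := List.mem_map.1 hb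
  exact eta_zero S c

theorem Phi_isHom : IsHom (Phi S) :=
  ⟨Phi_wedge S, Phi_vee S, Phi_diff S, Phi_zero S⟩

end SBAEmb
namespace SBAEmb

open SBA

variable (S : Type u) [SBA S] [Finite S]

open Classical in
noncomputable def envC (c : ClsS S) : Fin (NN S + 1) → Prim (AtomS S) :=
  fun j => if h : (j : ℕ) < NN S then
    (if (⟦(eA S).symm ⟨(j : ℕ), h⟩⟧ : ClsS S) = c then
      some ((eA S).symm ⟨(j : ℕ), h⟩, (eA S).symm ⟨(j : ℕ), h⟩) else none)
  else none

open Classical in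
theorem envC_vr (c : ClsS S) (a : AtomS S) :
    FreeS.evalF (envC S c) (vr S a)
      = if (⟦a⟧ : ClsS S) = c then some (a, a) else none := by
  classical
  show envC S c (ι S a) = _
  unfold envC
  have hlt : ((ι S a : Fin (NN S + 1)) : ℕ) < NN S := by
    simp only [ι, Fin.coe_castSucc]
    exact (eA S a).isLt
  rw [dif_pos hlt]
  have hFin : (⟨((ι S a : Fin (NN S + 1)) : ℕ), hlt⟩ : Fin (NN S)) = eA S a :=
    Fin.ext (by simp [ι])
  rw [hFin, Equiv.symm_apply_apply]

theorem prim_meet_none {α : Type u} (L : List (Prim α)) :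
    meetList (none : Prim α) L = none := by
  induction L with
  | nil => rfl
  | cons x t ih =>
    rw [meetList_cons, show ((none : Prim α) ⋏ x) = none from Prim.none_wedge x]
    exact ih

theorem prim_meet_some {α : Type u} :
    ∀ (L : List (Prim α)), (∀ x ∈ L, x ≠ none) → ∀ p : α × α,
      ∃ q : α × α, meetList (some p : Prim α) L = some q := by
  intro L
  induction L with
  | nil => exact fun _ p => ⟨p, rfl⟩
  | cons x t ih =>
    intro hL p
    obtain ⟨px, rfl⟩ := Option.ne_none_iff_exists'.1 (hL x (by simp))
    rw [meetList_cons, show (some p ⋏ some px : Prim α) = some (p.1, px.2) from rfl]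
    exact ih (fun y hy => hL y (by simp [hy])) _

theorem evalF_meetList {n : ℕ} {T : Type u} [SBA T] (env : Fin n → T) :
    ∀ (L : List (FreeS.{u} n)) (a : FreeS.{u} n),
      FreeS.evalF env (meetList a L) = meetList (FreeS.evalF env a) (L.map (FreeS.evalF env)) := by
  intro L
  induction L with
  | nil => intro a; rfl
  | cons x t ih =>
    intro a
    rw [meetList_cons, List.map_cons, meetList_cons, ih, FreeS.evalF_wedge]

theorem eval_muC_ne {c c' : ClsS S} (hne : c' ≠ c) :
    FreeS.evalF (envC S c) (muC S c') = SBA.zero := by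
  have hW : FreeS.evalF (envC S c) (Wc S c') = SBA.zero := by
    unfold Wc
    rw [evalF_meetList, envC_vr, if_neg (fun h => hne ((Quotient.out_eq c').symm.trans h))]
    exact prim_meet_none _
  unfold muC
  rw [FreeS.evalF_diff, hW]
  exact zero_diff _

theorem eval_eta_zero {c c' : ClsS S} {s : S} (h : piC c' s = SBA.zero) :
    FreeS.evalF (envC S c) (eta S c' s) = none := by
  unfold eta
  rw [h, eta0_zero]
  rfl

theorem eval_eta_ne {c c' : ClsS S} (hne : c' ≠ c) (s : S) :
    FreeS.evalF (envC S c) (eta S c' s) = none := by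
  by_cases h : piC c' s = SBA.zero
  · exact eval_eta_zero S h
  unfold eta
  rw [eta0_eq S (piC_atom h).2, FreeS.evalF_wedge, FreeS.evalF_wedge,
    eval_muC_ne S hne]
  show _ ⋏ SBA.zero ⋏ _ = (SBA.zero : Prim (AtomS S))
  rw [wedge_zero, zero_wedge]

theorem eval_eta_self (c : ClsS S) (s : S) (h : piC c s ≠ SBA.zero) :
    FreeS.evalF (envC S c) (eta S c s)
      = some (⟨piC c s ⋏ repC c, atom_of_drel (repC_atom c) (coordL S (piC_atom h).2)⟩,
          ⟨repC c ⋏ piC c s, atom_of_drel (repC_atom c) (coordR S (piC_atom h).2)⟩) := by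
  classical
  have hD := (piC_atom h).2
  have hYev : FreeS.evalF (envC S c) (Yc S c) = SBA.zero := by
    unfold Yc
    rw [FreeS.evalF_joinList]
    apply joinList_all_zero
    intro b hb
    rw [List.map_map] at hb
    obtain ⟨a, ha, rfl⟩ := List.mem_map.1 hb
    show FreeS.evalF (envC S c) (vr S a) = SBA.zero
    rw [envC_vr, if_neg ((mem_outsC S).1 ha)]
    rfl
  have hWev : ∃ q : AtomS S × AtomS S,
      FreeS.evalF (envC S c) (Wc S c) = some q := by
    unfold Wc
    rw [evalF_meetList, envC_vr, if_pos (Quotient.out_eq c), List.map_map]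
    apply prim_meet_some
    intro x hx
    obtain ⟨a, ha, rfl⟩ := List.mem_map.1 hx
    show FreeS.evalF (envC S c) (vr S a) ≠ none
    rw [envC_vr, if_pos ((mem_atomsC S).1 ha)]
    simp
  obtain ⟨q, hq⟩ := hWev
  have hMu : FreeS.evalF (envC S c) (muC S c) = some q := by
    unfold muC
    rw [FreeS.evalF_diff, hq, hYev]
    show (some q ∖ SBA.zero : Prim (AtomS S)) = some q
    exact diff_zero _
  unfold eta
  rw [eta0_eq S hD, FreeS.evalF_wedge, FreeS.evalF_wedge, hMu,
    vrS_atom S (atom_of_drel (repC_atom c) (coordL S hD)),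
    vrS_atom S (atom_of_drel (repC_atom c) (coordR S hD)),
    envC_vr S c ⟨_, atom_of_drel (repC_atom c) (coordL S hD)⟩,
    envC_vr S c ⟨_, atom_of_drel (repC_atom c) (coordR S hD)⟩,
    if_pos ((cls_eq_iff S ⟨_, atom_of_drel (repC_atom c) (coordL S hD)⟩ c).2 (coordL S hD)),
    if_pos ((cls_eq_iff S ⟨_, atom_of_drel (repC_atom c) (coordR S hD)⟩ c).2 (coordR S hD))]
  rfl

theorem eval_Phi (c : ClsS S) (s : S) :
    FreeS.evalF (envC S c) (Phi S s) = FreeS.evalF (envC S c) (eta S c s) := by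
  unfold Phi
  rw [FreeS.evalF_joinList, List.map_map]
  exact joinList_map_single clsList_nodup (mem_clsList c)
    (fun c' _ hne => eval_eta_ne S hne s)

theorem recon {c : ClsS S} {A : S} (hD : Drel A (repC c)) :
    (A ⋏ repC c) ⋏ (repC c ⋏ A) = A := by
  calc (A ⋏ repC c) ⋏ (repC c ⋏ A)
      = ((A ⋏ repC c) ⋏ repC c) ⋏ A := (wedge_assoc _ _ _).symm
    _ = (A ⋏ repC c) ⋏ A := by rw [wedge_assoc A (repC c) (repC c), wedge_self]
    _ = A := hD.1

theorem Phi_inj : Function.Injective (Phi S) := by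
  intro s t h
  have hpi : ∀ c : ClsS S, piC c s = piC c t := by
    intro c
    have he := congrArg (FreeS.evalF (envC S c)) h
    rw [eval_Phi, eval_Phi] at he
    by_cases hA : piC c s = SBA.zero <;> by_cases hB : piC c t = SBA.zero
    · rw [hA, hB]
    · rw [eval_eta_zero S hA, eval_eta_self S c t hB] at he
      exact absurd he (by simp)
    · rw [eval_eta_self S c s hA, eval_eta_zero S hB] at he
      exact absurd he (by simp)
    · rw [eval_eta_self S c s hA, eval_eta_self S c t hB] at he
      have h1 : piC c s ⋏ repC c = piC c t ⋏ repC c :=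
        congrArg Subtype.val (congrArg Prod.fst (Option.some.inj he))
      have h2 : repC c ⋏ piC c s = repC c ⋏ piC c t :=
        congrArg Subtype.val (congrArg Prod.snd (Option.some.inj he))
      calc piC c s = (piC c s ⋏ repC c) ⋏ (repC c ⋏ piC c s) :=
            (recon S (piC_atom hA).2).symm
        _ = (piC c t ⋏ repC c) ⋏ (repC c ⋏ piC c t) := by rw [h1, h2]
        _ = piC c t := recon S (piC_atom hB).2
  calc s = joinList ((clsList S).map (fun c => piC c s)) := eq_joinList_piC s
    _ = joinList ((clsList S).map (fun c => piC c t)) :=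
        joinList_map_congr (fun c _ => hpi c)
    _ = t := (eq_joinList_piC t).symm

end SBAEmb

theorem stmt12 (S : Type u) [SBA S] [Finite S] :
    ∃ (n : ℕ), 1 ≤ n ∧ ∃ (F : Type u) (instF : SBA F) (x : Fin n → F),
      Function.Injective x ∧
      @FreelyGenerates F instF (Set.range x) ∧
      ∃ f : S → F, @SBA.IsHom S _ F instF f ∧ Function.Injective f := by
  exact ⟨SBAEmb.NN S + 1, Nat.le_add_left 1 _, FreeS.{u} (SBAEmb.NN S + 1),
    FreeS.instSBA, FreeS.xgen _, FreeS.xgen_injective _, FreeS.freelyGenerates,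
    SBAEmb.Phi S, SBAEmb.Phi_isHom S, SBAEmb.Phi_inj S⟩
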